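/- arXiv:1810.11894 — 8 statements merged into one kernel-verified Lean document; each statement's English description precedes it below -/
import Mathlib

section
/- Theorem (general method with entropy-production-like constants, antisymmetric increments). Assume in addition that 𝒥_{ij}(t) ≠ 0 for all (i,j) ∈ E and all t. Suppose Z_{ij} : ℝ → ℝ ((i,j) ∈ V × V) are continuous τ-periodic functions with Z_{ij}(t) = −Z_{ji}(t) for all i,j,t and identically zero when (i,j) ∉ E, and m_i : ℝ → ℝ (i ∈ V) are continuously differentiable τ-periodic functions with Σ_{i∈V} m_i(t) = 0 for all t, satisfying m_i'(t) + Σ_{j∈V} Z_{ij}(t) = 0 for all i and t, together with the normalization (1/τ)∫₀^τ [(1/2)Σ_{(i,j)∈V×V} α_{ij}(t)Z_{ij}(t) + Σ_{i∈V} γ_i(t)m_i(t)] dt = y_{α,γ}. Then limsup_{y→y_{α,γ}, y≠y_{α,γ}} I_{α,γ}(y)/(y − y_{α,γ})² ≤ (1/(8 y_{α,γ}²)) · Σ_{(i,j)∈E} (1/τ)∫₀^τ [(Z_{ij}(t) − (m_i(t)w_{ij}(t) − m_j(t)w_{ji}(t)))² / 𝒥_{ij}(t)] · log(𝒬_{ij}(t)/𝒬_{ji}(t))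 dt, where the limsup is taken in [0,∞]. -/
open MeasureTheory Filter
open scoped Topology ENNReal

lemma aux_log_lb {r : ℝ} (hr : 1 ≤ r) : 2*(r-1)/(r+1) ≤ Real.log r := by
  have h0 : (0:ℝ) < r := by linarith
  set f : ℝ → ℝ := fun x => Real.log x - 2*(x-1)/(x+1) with hf
  have hmono : MonotoneOn f (Set.Ici 1) := by
    apply monotoneOn_of_deriv_nonneg (convex_Ici 1)
    · apply ContinuousOn.sub
      · exact Real.continuousOn_log.mono (by intro x hx; simp at hx ⊢; intro h; simp [h] at hx; linarith)
      · apply ContinuousOn.div (by fun_prop) (by fun_prop)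
        intro x hx; simp at hx; intro h; linarith
    · apply DifferentiableOn.sub
      · apply Real.differentiableOn_log.mono
        intro x hx
        rw [interior_Ici] at hx
        simp at hx ⊢; intro h; simp [h] at hx; linarith
      · apply DifferentiableOn.div (by fun_prop) (by fun_prop)
        intro x hx; rw [interior_Ici] at hx; simp at hx; intro h; linarith
    · intro x hx
      rw [interior_Ici] at hx
      simp only [Set.mem_Ioi] at hx
      have hx0 : (0:ℝ) < x := by linarith
      have hne : x + 1 ≠ 0 := by linarith
      have hd : HasDerivAt f (x⁻¹ - (2*(x+1) - 2*(x-1)*1)/(x+1)^2) x := by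
        have h1 : HasDerivAt Real.log x⁻¹ x := Real.hasDerivAt_log hx0.ne'
        have h2 : HasDerivAt (fun y : ℝ => 2*(y-1)) 2 x := by
          simpa using ((hasDerivAt_id x).sub_const 1).const_mul 2
        have h3 : HasDerivAt (fun y : ℝ => y+1) 1 x := by
          simpa using (hasDerivAt_id x).add_const 1
        exact h1.sub (h2.div h3 hne)
      rw [hd.deriv]
      have h4 : (0:ℝ) < (x+1)^2 := by positivity
      rw [sub_nonneg, div_le_iff₀ h4, ← sub_nonneg]
      have : x⁻¹ * (x+1)^2 - (2*(x+1) - 2*(x-1)*1) = (x-1)^2 / x := by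
        field_simp; ring
      rw [this]
      positivity
  have h1 : f 1 ≤ f r := hmono (by simp) (by simpa using hr) hr
  have h2 : f 1 = 0 := by simp [hf]
  rw [h2] at h1
  simp only [hf] at h1
  linarith


-- case b ≤ a
lemma phi_quad_right {b : ℝ} (hb : 0 < b) : ∀ a, b ≤ a →
    a * (Real.log a - Real.log b) - a + b ≤ (a-b)^2/(2*b) := by
  set g : ℝ → ℝ := fun a => (a-b)^2/(2*b) - (a * (Real.log a - Real.log b) - a + b) with hg
  have hmono : MonotoneOn g (Set.Ici b) := by
    apply monotoneOn_of_deriv_nonneg (convex_Ici b)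
    · apply ContinuousOn.sub (by fun_prop)
      apply ContinuousOn.add (ContinuousOn.sub ?_ (by fun_prop)) (by fun_prop)
      apply ContinuousOn.mul (by fun_prop)
      apply ContinuousOn.sub ?_ (by fun_prop)
      exact Real.continuousOn_log.mono (by intro x hx; simp at hx ⊢; intro h; rw [h] at hx; linarith)
    · intro x hx
      rw [interior_Ici] at hx
      simp only [Set.mem_Ioi] at hx
      have hx0 : (0:ℝ) < x := by linarith
      apply DifferentiableAt.differentiableWithinAt
      apply DifferentiableAt.sub (by fun_prop)
      apply DifferentiableAt.add (DifferentiableAt.sub ?_ (by fun_prop)) (by fun_prop)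
      exact (differentiableAt_fun_id.mul ((Real.differentiableAt_log hx0.ne').sub_const _))
    · intro x hx
      rw [interior_Ici] at hx
      simp only [Set.mem_Ioi] at hx
      have hx0 : (0:ℝ) < x := by linarith
      have hd : HasDerivAt g (2*(x-b)*1/(2*b) - ((1 * (Real.log x - Real.log b) + x * x⁻¹) - 1 + 0)) x := by
        have h1 : HasDerivAt (fun a : ℝ => (a-b)^2/(2*b)) (2*(x-b)*1/(2*b)) x := by
          have : HasDerivAt (fun a : ℝ => (a-b)^2) (2*(x-b)*1) x := by
            simpa using (((hasDerivAt_id x).sub_const b).fun_pow 2)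
          exact this.div_const (2*b)
        have h2 : HasDerivAt (fun a : ℝ => a * (Real.log a - Real.log b) - a + b)
            ((1 * (Real.log x - Real.log b) + x * x⁻¹) - 1 + 0) x := by
          have := (((hasDerivAt_id x).mul ((Real.hasDerivAt_log hx0.ne').sub_const (Real.log b))).sub
            (hasDerivAt_id x)).add_const b
          simpa using this
        exact h1.sub h2
      rw [hd.deriv]
      have hlog : Real.log x - Real.log b ≤ (x - b)/b := by
        rw [← Real.log_div hx0.ne' hb.ne']
        have := Real.log_le_sub_one_of_pos (show 0 < x/b by positivity)
        calc Real.log (x/b) ≤ x/b - 1 := this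
        _ = (x-b)/b := by field_simp
      have hxinv : x * x⁻¹ = 1 := by field_simp
      rw [hxinv]
      have h5 : 2*(x-b)*1/(2*b) = (x-b)/b := by field_simp
      rw [h5]
      linarith
  intro a ha
  have h1 : g b ≤ g a := hmono (by simp) (by simpa using ha) ha
  have h2 : g b = 0 := by simp [hg]
  rw [h2] at h1
  simp only [hg] at h1
  linarith

-- case a ≤ b
lemma phi_quad_left {b : ℝ} (hb : 0 < b) : ∀ a, 0 < a → a ≤ b →
    a * (Real.log a - Real.log b) - a + b ≤ (a-b)^2/(2*a) := by
  set g : ℝ → ℝ := fun a => (a-b)^2/(2*a) - (a * (Real.log a - Real.log b) - a + b) with hg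
  have hanti : AntitoneOn g (Set.Ioc 0 b) := by
    apply antitoneOn_of_deriv_nonpos (convex_Ioc 0 b)
    · apply ContinuousOn.sub
      · apply ContinuousOn.div (by fun_prop) (by fun_prop)
        intro x hx; obtain ⟨h1, h2⟩ := hx; positivity
      · apply ContinuousOn.add (ContinuousOn.sub ?_ (by fun_prop)) (by fun_prop)
        apply ContinuousOn.mul (by fun_prop)
        apply ContinuousOn.sub ?_ (by fun_prop)
        exact Real.continuousOn_log.mono (by
          intro x hx
          obtain ⟨h1, h2⟩ := hx
          simp only [Set.mem_compl_iff, Set.mem_singleton_iff]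
          exact ne_of_gt h1)
    · intro x hx
      rw [interior_Ioc] at hx
      obtain ⟨hx0, hxb⟩ := hx
      apply DifferentiableAt.differentiableWithinAt
      apply DifferentiableAt.sub
      · exact (differentiableAt_pow 2 |>.comp x (differentiableAt_fun_id.sub_const b) |>.div (by fun_prop) (by positivity))
      · apply DifferentiableAt.add (DifferentiableAt.sub ?_ (by fun_prop)) (by fun_prop)
        exact (differentiableAt_fun_id.mul ((Real.differentiableAt_log hx0.ne').sub_const _))
    · intro x hx
      rw [interior_Ioc] at hx
      obtain ⟨hx0, hxb⟩ := hx
      have hd : HasDerivAt g ((2*(x-b)*1*(2*x) - (x-b)^2*2)/(2*x)^2 - ((1 * (Real.log x - Real.log b) + x * x⁻¹) - 1 + 0)) x := by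
        have h1 : HasDerivAt (fun a : ℝ => (a-b)^2/(2*a)) ((2*(x-b)*1*(2*x) - (x-b)^2*2)/(2*x)^2) x := by
          have hnum : HasDerivAt (fun a : ℝ => (a-b)^2) (2*(x-b)*1) x := by
            simpa using (((hasDerivAt_id x).sub_const b).fun_pow 2)
          have hden : HasDerivAt (fun a : ℝ => 2*a) 2 x := by
            simpa using (hasDerivAt_id x).const_mul 2
          exact hnum.div hden (by positivity)
        have h2 : HasDerivAt (fun a : ℝ => a * (Real.log a - Real.log b) - a + b)
            ((1 * (Real.log x - Real.log b) + x * x⁻¹) - 1 + 0) x := by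
          have := (((hasDerivAt_id x).mul ((Real.hasDerivAt_log hx0.ne').sub_const (Real.log b))).sub
            (hasDerivAt_id x)).add_const b
          simpa using this
        exact h1.sub h2
      rw [hd.deriv]
      have hlog : Real.log b - Real.log x ≤ (b - x)/x := by
        rw [← Real.log_div hb.ne' hx0.ne']
        have := Real.log_le_sub_one_of_pos (show 0 < b/x by positivity)
        calc Real.log (b/x) ≤ b/x - 1 := this
        _ = (b-x)/x := by field_simp
      have hxinv : x * x⁻¹ = 1 := by field_simp
      rw [hxinv]
      have h5 : (2*(x-b)*1*(2*x) - (x-b)^2*2)/(2*x)^2 = (x-b)*(x+b)/(2*x^2) := by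
        field_simp; ring
      rw [h5]
      -- goal: (x-b)(x+b)/(2x²) - ((log x - log b) + 1 - 1 + 0) ≤ 0
      -- i.e. (x²-b²)/(2x²) ≤ log x - log b;  equivalent: log b - log x ≤ (b²-x²)/(2x²)
      -- we know log b - log x ≤ (b-x)/x and (b-x)/x ≤ (b²-x²)/(2x²) ⇔ 2x(b-x) ≤ b²-x² ⇔ 0 ≤ (b-x)²
      have h6 : (b-x)/x ≤ (b^2-x^2)/(2*x^2) := by
        rw [div_le_div_iff₀ hx0 (by positivity)]
        nlinarith [sq_nonneg (b-x)]
      have h7 : (x-b)*(x+b)/(2*x^2) = -((b^2-x^2)/(2*x^2)) := by ring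
      rw [h7]
      linarith
  intro a ha0 hab
  have h1 : g b ≤ g a := hanti (Set.mem_Ioc.mpr ⟨ha0, hab⟩) (Set.mem_Ioc.mpr ⟨hb, le_rfl⟩) hab
  have h2 : g b = 0 := by simp [hg]
  rw [h2] at h1
  simp only [hg] at h1
  linarith

lemma phi_quad {a b : ℝ} (ha : 0 < a) (hb : 0 < b) :
    a * Real.log (a/b) - a + b ≤ (a-b)^2/(2*min a b) := by
  rw [Real.log_div ha.ne' hb.ne']
  rcases le_total b a with h | h
  · rw [min_eq_right h]
    exact phi_quad_right hb a h
  · rw [min_eq_left h]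
    exact phi_quad_left hb a ha h



lemma pair_ineq {q p C : ℝ} (hq : 0 < q) (hp : 0 < p) (hne : q - p ≠ 0) :
    8 * ((C*q/(q+p))^2/(2*q)) + 8 * ((-C*p/(p+q))^2/(2*p)) ≤
      C^2/(q-p)*Real.log (q/p) + C^2/(p-q)*Real.log (p/q) := by
  have hqp : (0:ℝ) < q + p := by linarith
  have hLHS : 8 * ((C*q/(q+p))^2/(2*q)) + 8 * ((-C*p/(p+q))^2/(2*p)) = 4*C^2/(q+p) := by
    field_simp
    ring
  rw [hLHS]
  have hkey : ∀ u v : ℝ, 0 < v → v < u →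
      4*C^2/(u+v) ≤ C^2/(u-v)*Real.log (u/v) + C^2/(v-u)*(-Real.log (u/v)) := by
    intro u v hv huv
    have huv0 : (0:ℝ) < u - v := by linarith
    have hr1 : (1:ℝ) ≤ u/v := by rw [le_div_iff₀ hv]; linarith
    have hlb := aux_log_lb hr1
    have hlb2 : 2*(u-v)/(u+v) ≤ Real.log (u/v) := by
      have heq : 2*(u/v-1)/(u/v+1) = 2*(u-v)/(u+v) := by
        rw [div_eq_div_iff (by positivity) (by linarith)]
        field_simp
      rw [← heq]; exact hlb
    have hRHS : C^2/(u-v)*Real.log (u/v) + C^2/(v-u)*(-Real.log (u/v))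
        = 2*(C^2*Real.log (u/v))/(u-v) := by
      rw [show v - u = -(u-v) by ring, div_neg]
      ring
    rw [hRHS, div_le_div_iff₀ (by linarith) huv0]
    have h' : 2*(u-v) ≤ Real.log (u/v)*(u+v) := by
      rw [div_le_iff₀ (by linarith)] at hlb2; linarith
    have h'' := mul_le_mul_of_nonneg_left h' (sq_nonneg C)
    calc 4*C^2*(u-v) = 2*(C^2*(2*(u-v))) := by ring
    _ ≤ 2*(C^2*(Real.log (u/v)*(u+v))) := by linarith
    _ = 2*(C^2*Real.log (u/v))*(u+v) := by ring
  have hswap : Real.log (p/q) = - Real.log (q/p) := by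
    rw [show p/q = (q/p)⁻¹ by rw [inv_div], Real.log_inv]
  rw [hswap]
  rcases lt_or_gt_of_ne (sub_ne_zero.mp hne) with h | h
  · have h2 := hkey p q hq h
    rw [hswap] at h2
    calc 4*C^2/(q+p) = 4*C^2/(p+q) := by ring
    _ ≤ C^2/(p-q)*(-Real.log (q/p)) + C^2/(q-p)*(-(-Real.log (q/p))) := h2
    _ = C^2/(q-p)*Real.log (q/p) + C^2/(p-q)*(-Real.log (q/p)) := by ring
  · exact hkey q p hp h

lemma per_lb {τ : ℝ} (hτ : 0 < τ) {f : ℝ → ℝ} (hc : Continuous f)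
    (hper : Function.Periodic f τ) (hpos : ∀ t, 0 < f t) :
    ∃ δ > 0, ∀ t, δ ≤ f t := by
  obtain ⟨x0, hx0, hmin⟩ := isCompact_Icc.exists_isMinOn (α := ℝ)
    (s := Set.Icc 0 τ) ⟨0, Set.mem_Icc.mpr ⟨le_rfl, hτ.le⟩⟩ hc.continuousOn
  refine ⟨f x0, hpos x0, fun t => ?_⟩
  obtain ⟨y, hy, hfy⟩ := hper.exists_mem_Ico₀ hτ t
  rw [hfy]
  exact hmin (Set.mem_Icc.mpr ⟨hy.1, hy.2.le⟩)

lemma per_ub {τ : ℝ} (hτ : 0 < τ) {f : ℝ → ℝ} (hc : Continuous f)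
    (hper : Function.Periodic f τ) :
    ∃ M : ℝ, ∀ t, |f t| ≤ M := by
  obtain ⟨x0, hx0, hmax⟩ := isCompact_Icc.exists_isMaxOn (α := ℝ)
    (s := Set.Icc 0 τ) ⟨0, Set.mem_Icc.mpr ⟨le_rfl, hτ.le⟩⟩ (hc.abs).continuousOn
  refine ⟨|f x0|, fun t => ?_⟩
  obtain ⟨y, hy, hfy⟩ := hper.exists_mem_Ico₀ hτ t
  rw [hfy]
  exact hmax (Set.mem_Icc.mpr ⟨hy.1, hy.2.le⟩)
/-- The function `Φ(q,p) = q log(q/p) − q + p` on `[0,∞) × [0,∞)` with values in `[0,∞]`,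
with the conventions `Φ(0,p) = p` and `Φ(q,0) = ∞` for `q > 0`. -/
noncomputable def Phi (q p : ℝ) : ℝ≥0∞ :=
  if q = 0 then ENNReal.ofReal p
  else if p = 0 then ⊤
  else ENNReal.ofReal (q * Real.log (q / p) - q + p)

set_option maxHeartbeats 2000000 in
theorem stmt6
    {V : Type} [Fintype V] [Nonempty V]
    (E : Finset (V × V)) (hE : ∀ i : V, (i, i) ∉ E)
    (hE_symm : ∀ i j : V, (i, j) ∈ E ↔ (j, i) ∈ E)
    (τ : ℝ) (hτ : 0 < τ)
    (w : V → V → ℝ → ℝ)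
    (hw_cont : ∀ i j, Continuous (w i j))
    (hw_per : ∀ i j, Function.Periodic (w i j) τ)
    (hw_pos : ∀ i j, (i, j) ∈ E → ∀ t, 0 < w i j t)
    (hw_zero : ∀ i j, (i, j) ∉ E → ∀ t, w i j t = 0)
    (pi : V → ℝ → ℝ)
    (hpi_diff : ∀ i, ContDiff ℝ 1 (pi i))
    (hpi_per : ∀ i, Function.Periodic (pi i) τ)
    (hpi_pos : ∀ i t, 0 < pi i t)
    (hpi_sum : ∀ t : ℝ, ∑ i, pi i t = 1)
    (hpi_cont_eq : ∀ i t, deriv (pi i) t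
      + (∑ j, pi i t * w i j t) - (∑ j, pi j t * w j i t) = 0)
    (hJ_ne : ∀ i j, (i, j) ∈ E → ∀ t : ℝ,
      pi i t * w i j t - pi j t * w j i t ≠ 0)
    (α : V → V → ℝ → ℝ)
    (hα_cont : ∀ i j, Continuous (α i j))
    (hα_per : ∀ i j, Function.Periodic (α i j) τ)
    (hα_anti : ∀ i j (t : ℝ), α i j t = - α j i t)
    (γ : V → ℝ → ℝ)
    (hγ_cont : ∀ i, Continuous (γ i))
    (hγ_per : ∀ i, Function.Periodic (γ i) τ)
    (y0 : ℝ)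
    (hy0 : y0 = (1 / τ) * (∫ t in (0:ℝ)..τ,
      ((∑ i, ∑ j, α i j t * (pi i t * w i j t)) + ∑ i, γ i t * pi i t)))
    (hy0_ne : y0 ≠ 0)
    (Iag : ℝ → ℝ≥0∞)
    (hI : ∀ y : ℝ, Iag y = sInf { c : ℝ≥0∞ |
      ∃ (Q : V → V → ℝ → ℝ) (ρ : V → ℝ → ℝ),
        (∀ i j, Continuous (Q i j)) ∧
        (∀ i j, Function.Periodic (Q i j) τ) ∧
        (∀ i j t, 0 ≤ Q i j t) ∧
        (∀ i j, (i, j) ∉ E → ∀ t, Q i j t = 0) ∧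
        (∀ i, ContDiff ℝ 1 (ρ i)) ∧
        (∀ i, Function.Periodic (ρ i) τ) ∧
        (∀ i t, 0 ≤ ρ i t) ∧
        (∀ t : ℝ, ∑ i, ρ i t = 1) ∧
        (∀ i t, deriv (ρ i) t + (∑ j, Q i j t) - (∑ j, Q j i t) = 0) ∧
        ((1 / τ) * (∫ t in (0:ℝ)..τ,
          ((∑ i, ∑ j, α i j t * Q i j t) + ∑ i, γ i t * ρ i t)) = y) ∧
        c = ∑ e ∈ E, ENNReal.ofReal (1 / τ) *
          (∫⁻ t in Set.Ioc (0:ℝ) τ, Phi (Q e.1 e.2 t) (ρ e.1 t * w e.1 e.2 t)) })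
    -- the legal input (Z, m)
    (Z : V → V → ℝ → ℝ)
    (hZ_cont : ∀ i j, Continuous (Z i j))
    (hZ_per : ∀ i j, Function.Periodic (Z i j) τ)
    (hZ_anti : ∀ i j (t : ℝ), Z i j t = - Z j i t)
    (hZ_zero : ∀ i j, (i, j) ∉ E → ∀ t, Z i j t = 0)
    (m : V → ℝ → ℝ)
    (hm_diff : ∀ i, ContDiff ℝ 1 (m i))
    (hm_per : ∀ i, Function.Periodic (m i) τ)
    (hm_sum : ∀ t : ℝ, ∑ i, m i t = 0)
    (hm_cont_eq : ∀ i (t : ℝ), deriv (m i) t + (∑ j, Z i j t) = 0)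
    (h_norm : (1 / τ) * (∫ t in (0:ℝ)..τ,
      ((1 / 2) * (∑ i, ∑ j, α i j t * Z i j t) + ∑ i, γ i t * m i t)) = y0) :
    Filter.limsup (fun y : ℝ => Iag y / ENNReal.ofReal ((y - y0) ^ 2)) (𝓝[≠] y0)
      ≤ ENNReal.ofReal ((1 / (8 * y0 ^ 2)) *
          ∑ e ∈ E, (1 / τ) * (∫ t in (0:ℝ)..τ,
            ((Z e.1 e.2 t - (m e.1 t * w e.1 e.2 t - m e.2 t * w e.2 e.1 t)) ^ 2
                / (pi e.1 t * w e.1 e.2 t - pi e.2 t * w e.2 e.1 t)) *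
              Real.log ((pi e.1 t * w e.1 e.2 t) / (pi e.2 t * w e.2 e.1 t)))) := by
  classical
  have hy0sq : 0 < y0 ^ 2 := by
    have h := sq_abs y0
    nlinarith [abs_pos.mpr hy0_ne]
  have hpic : ∀ i, Continuous (pi i) := fun i => (hpi_diff i).continuous
  have hmc : ∀ i, Continuous (m i) := fun i => (hm_diff i).continuous
  have hq_pos : ∀ i j, (i, j) ∈ E → ∀ t, 0 < pi i t * w i j t := fun i j he t =>
    mul_pos (hpi_pos i t) (hw_pos i j he t)
  have hqq_pos : ∀ i j, (i, j) ∈ E → ∀ t, 0 < pi i t * w i j t + pi j t * w j i t := by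
    intro i j he t
    have h1 := hq_pos i j he t
    have h2 := hq_pos j i ((hE_symm i j).1 he) t
    linarith
  set cc : V → V → ℝ → ℝ := fun i j t =>
    if (i, j) ∈ E then
      (Z i j t - (m i t * w i j t - m j t * w j i t)) * (pi i t * w i j t)
        / (pi i t * w i j t + pi j t * w j i t)
    else 0 with hcc_def
  have hcc_cont : ∀ i j, Continuous (cc i j) := by
    intro i j
    by_cases he : (i, j) ∈ E
    · simp only [hcc_def, if_pos he]
      exact Continuous.div
        (((hZ_cont i j).sub (((hmc i).mul (hw_cont i j)).sub ((hmc j).mul (hw_cont j i)))).mul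
          ((hpic i).mul (hw_cont i j)))
        (((hpic i).mul (hw_cont i j)).add ((hpic j).mul (hw_cont j i)))
        (fun t => (hqq_pos i j he t).ne')
    · simp only [hcc_def, if_neg he]; exact continuous_const
  have hcc_per : ∀ i j, Function.Periodic (cc i j) τ := by
    intro i j t
    simp only [hcc_def]
    rw [hZ_per i j t, hm_per i t, hm_per j t, hw_per i j t, hw_per j i t,
      hpi_per i t, hpi_per j t]
  set ψ : V → V → ℝ → ℝ := fun i j t => m i t * w i j t + cc i j t with hψ_def
  have hψ_cont : ∀ i j, Continuous (ψ i j) := fun i j =>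
    ((hmc i).mul (hw_cont i j)).add (hcc_cont i j)
  have hψ_per : ∀ i j, Function.Periodic (ψ i j) τ := by
    intro i j t
    simp only [hψ_def]
    rw [hm_per i t, hw_per i j t, hcc_per i j t]
  have hψdiff : ∀ i j t, ψ i j t - ψ j i t = Z i j t := by
    intro i j t
    by_cases he : (i, j) ∈ E
    · have hji := (hE_symm i j).1 he
      have d1 := (hqq_pos i j he t).ne'
      have d2 := (hqq_pos j i hji t).ne'
      simp only [hψ_def, hcc_def, if_pos he, if_pos hji]
      rw [hZ_anti j i t]
      rw [show pi j t * w j i t + pi i t * w i j t = pi i t * w i j t + pi j t * w j i t by ring]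
      linear_combination (Z i j t - m i t * w i j t + m j t * w j i t) * mul_inv_cancel₀ d1
    · have hji : (j, i) ∉ E := fun h => he ((hE_symm i j).2 h)
      simp only [hψ_def, hcc_def, if_neg he, if_neg hji, hw_zero i j he t,
        hw_zero j i hji t, hZ_zero i j he t]
      ring
  -- lower bounds
  have hδq' : ∀ e : V × V, ∃ d > 0, ∀ t, e ∈ E → d ≤ pi e.1 t * w e.1 e.2 t := by
    intro e
    by_cases he : e ∈ E
    · have he' : (e.1, e.2) ∈ E := by simpa using he
      obtain ⟨d, hd, hdl⟩ := per_lb hτ ((hpic e.1).mul (hw_cont e.1 e.2))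
        ((hpi_per e.1).mul (hw_per e.1 e.2)) (hq_pos e.1 e.2 he')
      exact ⟨d, hd, fun t _ => hdl t⟩
    · exact ⟨1, one_pos, fun t h => absurd h he⟩
  choose δq hδq_pos hδq using hδq'
  have hδπ' : ∀ i, ∃ d > 0, ∀ t, d ≤ pi i t := fun i =>
    per_lb hτ (hpic i) (hpi_per i) (hpi_pos i)
  choose δπ hδπ_pos hδπ using hδπ'
  set δ : ℝ := min (Finset.univ.inf' Finset.univ_nonempty δq)
      (Finset.univ.inf' Finset.univ_nonempty δπ) with hδ_def
  have hδ_pos : 0 < δ := by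
    apply lt_min
    · exact (Finset.lt_inf'_iff _).mpr (fun e _ => hδq_pos e)
    · exact (Finset.lt_inf'_iff _).mpr (fun i _ => hδπ_pos i)
  have hδq_le : ∀ i j, (i, j) ∈ E → ∀ t, δ ≤ pi i t * w i j t := by
    intro i j he t
    exact le_trans (le_trans (min_le_left _ _)
      (Finset.inf'_le _ (Finset.mem_univ (i, j)))) (hδq (i, j) t he)
  have hδπ_le : ∀ i t, δ ≤ pi i t := by
    intro i t
    exact le_trans (le_trans (min_le_right _ _)
      (Finset.inf'_le _ (Finset.mem_univ i))) (hδπ i t)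
  -- upper bounds
  have hub : ∀ e : V × V, ∃ Mb : ℝ, ∀ t,
      |ψ e.1 e.2 t| + |m e.1 t * w e.1 e.2 t| + |m e.1 t| ≤ Mb := by
    intro e
    obtain ⟨Mb, hMb⟩ := per_ub hτ
      (((hψ_cont e.1 e.2).abs.add ((hmc e.1).mul (hw_cont e.1 e.2)).abs).add (hmc e.1).abs)
      (by
        intro t
        simp only [Pi.add_apply, Pi.mul_apply]
        rw [hψ_per e.1 e.2 t, hm_per e.1 t, hw_per e.1 e.2 t])
    exact ⟨Mb, fun t => (le_abs_self _).trans (hMb t)⟩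
  choose Mf hMf using hub
  set M : ℝ := max 1 (Finset.univ.sup' Finset.univ_nonempty Mf) with hM_def
  have hM1 : (1:ℝ) ≤ M := le_max_left _ _
  have hM0 : (0:ℝ) < M := lt_of_lt_of_le one_pos hM1
  have hMle : ∀ e : V × V, Mf e ≤ M := fun e =>
    le_trans (Finset.le_sup' _ (Finset.mem_univ e)) (le_max_right _ _)
  have hMψ : ∀ i j t, |ψ i j t| ≤ M := by
    intro i j t
    have h1 := hMf (i, j) t
    have h2 := hMle (i, j)
    have h3 := abs_nonneg (m i t * w i j t)
    have h4 := abs_nonneg (m i t)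
    simp only at h1
    linarith
  have hMμ : ∀ i j t, |m i t * w i j t| ≤ M := by
    intro i j t
    have h1 := hMf (i, j) t
    have h2 := hMle (i, j)
    have h3 := abs_nonneg (ψ i j t)
    have h4 := abs_nonneg (m i t)
    simp only at h1
    linarith
  have hMm : ∀ i t, |m i t| ≤ M := by
    intro i t
    have h1 := hMf (i, i) t
    have h2 := hMle (i, i)
    have h3 := abs_nonneg (ψ i i t)
    have h4 := abs_nonneg (m i t * w i i t)
    simp only at h1
    linarith
  -- the quadratic constant
  set k : V × V → ℝ := fun e =>
    (1/τ) * ∫ t in (0:ℝ)..τ, (cc e.1 e.2 t)^2 / (2*(pi e.1 t * w e.1 e.2 t)) with hk_def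
  set K₀ : ℝ := ∑ e ∈ E, k e with hK₀_def
  have hk_nonneg : ∀ e ∈ E, 0 ≤ k e := by
    intro e he
    have he' : (e.1, e.2) ∈ E := by simpa using he
    apply mul_nonneg (by positivity)
    apply intervalIntegral.integral_nonneg hτ.le
    intro t _
    have := hq_pos e.1 e.2 he' t
    positivity
  have hK₀_nonneg : 0 ≤ K₀ := Finset.sum_nonneg hk_nonneg
  -- pointwise alpha-psi identity
  have h2sum : ∀ t, 2 * (∑ i, ∑ j, α i j t * ψ i j t) = ∑ i, ∑ j, α i j t * Z i j t := by
    intro t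
    have e1 : ∑ i, ∑ j, α i j t * ψ j i t = - ∑ i, ∑ j, α i j t * ψ i j t := by
      rw [Finset.sum_comm, ← Finset.sum_neg_distrib]
      apply Finset.sum_congr rfl
      intro i _
      rw [← Finset.sum_neg_distrib]
      apply Finset.sum_congr rfl
      intro j _
      rw [hα_anti j i t]
      ring
    have e2 : ∑ i, ∑ j, α i j t * Z i j t
        = (∑ i, ∑ j, α i j t * ψ i j t) - ∑ i, ∑ j, α i j t * ψ j i t := by
      rw [← Finset.sum_sub_distrib]
      apply Finset.sum_congr rfl
      intro i _
      rw [← Finset.sum_sub_distrib]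
      apply Finset.sum_congr rfl
      intro j _
      rw [← hψdiff i j t]
      ring
    rw [e2, e1]
    ring
  set A₀ : ℝ → ℝ := fun t =>
    (∑ i, ∑ j, α i j t * (pi i t * w i j t)) + ∑ i, γ i t * pi i t with hA₀_def
  set B₀ : ℝ → ℝ := fun t =>
    (1 / 2) * (∑ i, ∑ j, α i j t * Z i j t) + ∑ i, γ i t * m i t with hB₀_def
  have hA₀_cont : Continuous A₀ := by
    apply Continuous.add
    · apply continuous_finset_sum
      intro i _
      apply continuous_finset_sum
      intro j _
      exact (hα_cont i j).mul ((hpic i).mul (hw_cont i j))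
    · apply continuous_finset_sum
      intro i _
      exact (hγ_cont i).mul (hpic i)
  have hB₀_cont : Continuous B₀ := by
    apply Continuous.add
    · apply Continuous.mul continuous_const
      apply continuous_finset_sum
      intro i _
      apply continuous_finset_sum
      intro j _
      exact (hα_cont i j).mul (hZ_cont i j)
    · apply continuous_finset_sum
      intro i _
      exact (hγ_cont i).mul (hmc i)
  have hy0A : y0 = (1/τ) * ∫ t in (0:ℝ)..τ, A₀ t := hy0
  have hy0B : (1/τ) * (∫ t in (0:ℝ)..τ, B₀ t) = y0 := h_norm
  -- the key construction
  have key : ∀ ε : ℝ, 0 < ε → ∃ η > 0, ∀ y : ℝ, |y - y0| ≤ η →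
      Iag y ≤ ENNReal.ofReal ((K₀ / y0 ^ 2 + ε) * (y - y0) ^ 2) := by
    intro ε hε
    set u₀ : ℝ := min (1/2) (ε * y0 ^ 2 / (2 * K₀ + 1)) with hu₀_def
    have hu₀_pos : 0 < u₀ := by
      apply lt_min (by norm_num)
      have : 0 < 2 * K₀ + 1 := by linarith
      positivity
    have hu₀_half : u₀ ≤ 1/2 := min_le_left _ _
    have h1u₀ : 0 < 1 - u₀ := by linarith
    refine ⟨u₀ * δ * |y0| / M, by positivity, ?_⟩
    intro y hy
    set θ : ℝ := (y - y0) / y0 with hθ_def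
    have hθM : |θ| * M ≤ u₀ * δ := by
      have habs : |θ| = |y - y0| / |y0| := by rw [hθ_def, abs_div]
      have h2 : |y - y0| * M ≤ u₀ * δ * |y0| := by
        have h3 := mul_le_mul_of_nonneg_right hy hM0.le
        rwa [div_mul_cancel₀ _ hM0.ne'] at h3
      have hy0abs : 0 < |y0| := abs_pos.mpr hy0_ne
      calc |θ| * M = (|y - y0| * M) / |y0| := by rw [habs]; ring
      _ ≤ (u₀ * δ * |y0|) / |y0| := by gcongr
      _ = u₀ * δ := by field_simp
    have hθb : ∀ x : ℝ, |x| ≤ M → |θ * x| ≤ u₀ * δ := by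
      intro x hx
      rw [abs_mul]
      calc |θ| * |x| ≤ |θ| * M := by gcongr
      _ ≤ u₀ * δ := hθM
    set ρ : V → ℝ → ℝ := fun i t => pi i t + θ * m i t with hρ_def
    set Q : V → V → ℝ → ℝ := fun i j t => ρ i t * w i j t + θ * cc i j t with hQ_def
    have hQψ : ∀ i j t, Q i j t = pi i t * w i j t + θ * ψ i j t := by
      intro i j t
      simp only [hQ_def, hρ_def, hψ_def, hcc_def]
      ring
    have hu₀δ : u₀ * δ ≤ δ / 2 := by nlinarith
    have hρ_lb : ∀ i t, δ / 2 ≤ ρ i t := by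
      intro i t
      have h1 := abs_le.mp (hθb (m i t) (hMm i t))
      have h2 := hδπ_le i t
      simp only [hρ_def]
      linarith
    have hρ_pos : ∀ i t, 0 < ρ i t := fun i t =>
      lt_of_lt_of_le (by positivity) (hρ_lb i t)
    have hQ_lb : ∀ i j, (i, j) ∈ E → ∀ t, (1 - u₀) * (pi i t * w i j t) ≤ Q i j t := by
      intro i j he t
      have h1 := abs_le.mp (hθb (ψ i j t) (hMψ i j t))
      have h2 := hδq_le i j he t
      have h3 : u₀ * δ ≤ u₀ * (pi i t * w i j t) := by gcongr
      rw [hQψ]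
      linarith
    have hB_lb : ∀ i j, (i, j) ∈ E → ∀ t,
        (1 - u₀) * (pi i t * w i j t) ≤ ρ i t * w i j t := by
      intro i j he t
      have h1 := abs_le.mp (hθb (m i t * w i j t) (hMμ i j t))
      have h2 := hδq_le i j he t
      have h3 : u₀ * δ ≤ u₀ * (pi i t * w i j t) := by gcongr
      have h4 : ρ i t * w i j t = pi i t * w i j t + θ * (m i t * w i j t) := by
        simp only [hρ_def]; ring
      rw [h4]
      linarith
    have hQ_nonneg : ∀ i j t, 0 ≤ Q i j t := by
      intro i j t
      by_cases he : (i, j) ∈ E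
      · refine le_trans ?_ (hQ_lb i j he t)
        have := hq_pos i j he t
        positivity
      · simp only [hQ_def, hcc_def, if_neg he, hw_zero i j he t]
        ring_nf
        exact le_rfl
    -- derivative of rho
    have hρ_deriv : ∀ i t, deriv (ρ i) t = deriv (pi i) t + θ * deriv (m i) t := by
      intro i t
      have h1 : HasDerivAt (pi i) (deriv (pi i) t) t :=
        (((hpi_diff i).differentiable one_ne_zero) t).hasDerivAt
      have h2 : HasDerivAt (m i) (deriv (m i) t) t :=
        (((hm_diff i).differentiable one_ne_zero) t).hasDerivAt
      have h3 : HasDerivAt (fun s => pi i s + θ * m i s)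
          (deriv (pi i) t + θ * deriv (m i) t) t := h1.add (h2.const_mul θ)
      simp only [hρ_def]
      exact h3.deriv
    -- continuity equation for (Q, ρ)
    have hderiv_eq : ∀ i t, deriv (ρ i) t + (∑ j, Q i j t) - (∑ j, Q j i t) = 0 := by
      intro i t
      have e1 : ∑ j, Q i j t = (∑ j, pi i t * w i j t) + θ * ∑ j, ψ i j t := by
        rw [Finset.mul_sum, ← Finset.sum_add_distrib]
        exact Finset.sum_congr rfl fun j _ => hQψ i j t
      have e2 : ∑ j, Q j i t = (∑ j, pi j t * w j i t) + θ * ∑ j, ψ j i t := by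
        rw [Finset.mul_sum, ← Finset.sum_add_distrib]
        exact Finset.sum_congr rfl fun j _ => hQψ j i t
      have e3 : (∑ j, ψ i j t) - (∑ j, ψ j i t) = ∑ j, Z i j t := by
        rw [← Finset.sum_sub_distrib]
        exact Finset.sum_congr rfl fun j _ => hψdiff i j t
      rw [hρ_deriv, e1, e2]
      have h3 := hpi_cont_eq i t
      have h4 := hm_cont_eq i t
      linear_combination h3 + θ * h4 + θ * e3
    -- the value of the linear functional
    have hval : (1 / τ) * (∫ t in (0:ℝ)..τ,
        ((∑ i, ∑ j, α i j t * Q i j t) + ∑ i, γ i t * ρ i t)) = y := by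
      have hpt : ∀ t, ((∑ i, ∑ j, α i j t * Q i j t) + ∑ i, γ i t * ρ i t)
          = A₀ t + θ * B₀ t := by
        intro t
        have e1 : ∑ i, ∑ j, α i j t * Q i j t
            = (∑ i, ∑ j, α i j t * (pi i t * w i j t)) + θ * ∑ i, ∑ j, α i j t * ψ i j t := by
          rw [Finset.mul_sum, ← Finset.sum_add_distrib]
          apply Finset.sum_congr rfl
          intro i _
          rw [Finset.mul_sum, ← Finset.sum_add_distrib]
          apply Finset.sum_congr rfl
          intro j _
          rw [hQψ]
          ring
        have e2 : ∑ i, γ i t * ρ i t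
            = (∑ i, γ i t * pi i t) + θ * ∑ i, γ i t * m i t := by
          rw [Finset.mul_sum, ← Finset.sum_add_distrib]
          apply Finset.sum_congr rfl
          intro i _
          simp only [hρ_def]
          ring
        have e3 := h2sum t
        simp only [hA₀_def, hB₀_def]
        rw [e1, e2]
        linear_combination (θ / 2) * e3
      rw [intervalIntegral.integral_congr (g := fun t => A₀ t + θ * B₀ t)
        (fun t _ => hpt t)]
      rw [intervalIntegral.integral_add (f := A₀) (g := fun t => θ * B₀ t) (hA₀_cont.intervalIntegrable 0 τ)
        ((continuous_const.mul hB₀_cont : Continuous fun t => θ * B₀ t).intervalIntegrable 0 τ)]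
      rw [intervalIntegral.integral_const_mul]
      have hexp : (1/τ) * ((∫ t in (0:ℝ)..τ, A₀ t) + θ * ∫ t in (0:ℝ)..τ, B₀ t)
          = (1/τ) * (∫ t in (0:ℝ)..τ, A₀ t) + θ * ((1/τ) * ∫ t in (0:ℝ)..τ, B₀ t) := by
        ring
      rw [hexp, ← hy0A, hy0B, hθ_def]
      field_simp
      ring
    -- membership
    have hmem : Iag y ≤ ∑ e ∈ E, ENNReal.ofReal (1 / τ) *
        (∫⁻ t in Set.Ioc (0:ℝ) τ, Phi (Q e.1 e.2 t) (ρ e.1 t * w e.1 e.2 t)) := by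
      rw [hI y]
      apply sInf_le
      refine ⟨Q, ρ, ?_, ?_, hQ_nonneg, ?_, ?_, ?_,
        (fun i t => (hρ_pos i t).le), ?_, hderiv_eq, hval, rfl⟩
      · intro i j
        simp only [hQ_def, hρ_def]
        exact (((hpic i).add (continuous_const.mul (hmc i))).mul (hw_cont i j)).add
          (continuous_const.mul (hcc_cont i j))
      · intro i j t
        simp only [hQ_def, hρ_def]
        rw [hpi_per i t, hm_per i t, hw_per i j t, hcc_per i j t]
      · intro i j he t
        simp only [hQ_def, hcc_def, if_neg he, hw_zero i j he t]
        ring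
      · intro i
        simp only [hρ_def]
        exact (hpi_diff i).add (contDiff_const.mul (hm_diff i))
      · intro i t
        simp only [hρ_def]
        rw [hpi_per i t, hm_per i t]
      · intro t
        simp only [hρ_def]
        rw [Finset.sum_add_distrib, hpi_sum t, ← Finset.mul_sum, hm_sum t]
        ring
    refine hmem.trans ?_
    have hstep : ∀ e ∈ E, ENNReal.ofReal (1 / τ) *
        (∫⁻ t in Set.Ioc (0:ℝ) τ, Phi (Q e.1 e.2 t) (ρ e.1 t * w e.1 e.2 t))
        ≤ ENNReal.ofReal ((θ^2/(1-u₀)) * k e) := by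
      rintro ⟨i, j⟩ he
      have hji := (hE_symm i j).1 he
      set g : ℝ → ℝ := fun t => (θ^2/(1-u₀)) * ((cc i j t)^2/(2*(pi i t * w i j t))) with hg_def
      have hg_cont : Continuous g := by
        apply continuous_const.mul
        apply Continuous.div ((hcc_cont i j).pow 2)
          (continuous_const.mul ((hpic i).mul (hw_cont i j)))
        intro t
        have := hq_pos i j he t
        exact mul_ne_zero two_ne_zero this.ne'
      have hg_nonneg : ∀ t, 0 ≤ g t := by
        intro t
        have h1 := hq_pos i j he t
        simp only [hg_def]
        positivity
      have hpoint : ∀ t, Phi (Q i j t) (ρ i t * w i j t) ≤ ENNReal.ofReal (g t) := by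
        intro t
        have hqv_pos : 0 < pi i t * w i j t := hq_pos i j he t
        have hA_lb : (1-u₀) * (pi i t * w i j t) ≤ Q i j t := hQ_lb i j he t
        have hB_lb' : (1-u₀) * (pi i t * w i j t) ≤ ρ i t * w i j t := hB_lb i j he t
        have hA_pos : 0 < Q i j t := lt_of_lt_of_le (by positivity) hA_lb
        have hB_pos : 0 < ρ i t * w i j t := lt_of_lt_of_le (by positivity) hB_lb'
        have hmin : (1-u₀) * (pi i t * w i j t)
            ≤ min (Q i j t) (ρ i t * w i j t) := le_min hA_lb hB_lb'
        rw [Phi, if_neg hA_pos.ne', if_neg hB_pos.ne']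
        apply ENNReal.ofReal_le_ofReal
        have h1 := phi_quad hA_pos hB_pos
        have hAB : Q i j t - ρ i t * w i j t = θ * cc i j t := by
          simp only [hQ_def]
          ring
        calc Q i j t * Real.log (Q i j t / (ρ i t * w i j t)) - Q i j t + ρ i t * w i j t
            ≤ (Q i j t - ρ i t * w i j t)^2 / (2 * min (Q i j t) (ρ i t * w i j t)) := h1
        _ ≤ (θ * cc i j t)^2 / (2 * ((1-u₀) * (pi i t * w i j t))) := by
            rw [hAB]
            gcongr
        _ = g t := by
            simp only [hg_def]
            field_simp
      calc ENNReal.ofReal (1 / τ) *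
            (∫⁻ t in Set.Ioc (0:ℝ) τ, Phi (Q i j t) (ρ i t * w i j t))
          ≤ ENNReal.ofReal (1 / τ) * ∫⁻ t in Set.Ioc (0:ℝ) τ, ENNReal.ofReal (g t) :=
            mul_le_mul_right (MeasureTheory.lintegral_mono (fun t => hpoint t)) _
      _ = ENNReal.ofReal (1 / τ) * ENNReal.ofReal (∫ t in Set.Ioc (0:ℝ) τ, g t) := by
            rw [← MeasureTheory.ofReal_integral_eq_lintegral_ofReal
              (hg_cont.integrableOn_Ioc) (MeasureTheory.ae_of_all _ hg_nonneg)]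
      _ = ENNReal.ofReal ((θ^2/(1-u₀)) * k (i, j)) := by
            rw [← ENNReal.ofReal_mul (by positivity : (0:ℝ) ≤ 1/τ)]
            congr 1
            rw [← intervalIntegral.integral_of_le hτ.le]
            simp only [hg_def, hk_def]
            rw [intervalIntegral.integral_const_mul]
            ring
    calc ∑ e ∈ E, ENNReal.ofReal (1 / τ) *
          (∫⁻ t in Set.Ioc (0:ℝ) τ, Phi (Q e.1 e.2 t) (ρ e.1 t * w e.1 e.2 t))
        ≤ ∑ e ∈ E, ENNReal.ofReal ((θ^2/(1-u₀)) * k e) := Finset.sum_le_sum hstep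
    _ = ENNReal.ofReal (∑ e ∈ E, (θ^2/(1-u₀)) * k e) := by
        rw [ENNReal.ofReal_sum_of_nonneg]
        intro e he
        exact mul_nonneg (by positivity) (hk_nonneg e he)
    _ = ENNReal.ofReal ((θ^2/(1-u₀)) * K₀) := by
        rw [← Finset.mul_sum]
    _ ≤ ENNReal.ofReal ((K₀ / y0 ^ 2 + ε) * (y - y0) ^ 2) := by
        apply ENNReal.ofReal_le_ofReal
        have hyy : y - y0 = θ * y0 := by
          rw [hθ_def]
          field_simp
        rw [hyy]
        have hεy : 0 < ε * y0 ^ 2 := by positivity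
        have e2' : u₀ * (2 * K₀ + 1) ≤ ε * y0 ^ 2 := by
          have h2K : (0:ℝ) < 2 * K₀ + 1 := by linarith
          have hmr : u₀ ≤ ε * y0 ^ 2 / (2 * K₀ + 1) := min_le_right _ _
          calc u₀ * (2 * K₀ + 1) ≤ (ε * y0 ^ 2 / (2 * K₀ + 1)) * (2 * K₀ + 1) := by gcongr
          _ = ε * y0 ^ 2 := by field_simp
        have hprod : u₀ * (ε * y0 ^ 2) ≤ (1/2) * (ε * y0 ^ 2) :=
          mul_le_mul_of_nonneg_right hu₀_half hεy.le
        have hKb : K₀ / (1 - u₀) ≤ K₀ + ε * y0 ^ 2 := by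
          rw [div_le_iff₀ h1u₀]
          nlinarith [hK₀_nonneg, hu₀_pos]
        calc (θ^2/(1-u₀)) * K₀ = θ^2 * (K₀/(1-u₀)) := by ring
        _ ≤ θ^2 * (K₀ + ε * y0 ^ 2) := by gcongr
        _ = (K₀ / y0 ^ 2 + ε) * (θ * y0) ^ 2 := by
            field_simp
  -- final comparison: 8 K₀ ≤ S
  set s : V × V → ℝ := fun e => (1 / τ) * (∫ t in (0:ℝ)..τ,
      ((Z e.1 e.2 t - (m e.1 t * w e.1 e.2 t - m e.2 t * w e.2 e.1 t)) ^ 2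
          / (pi e.1 t * w e.1 e.2 t - pi e.2 t * w e.2 e.1 t)) *
        Real.log ((pi e.1 t * w e.1 e.2 t) / (pi e.2 t * w e.2 e.1 t))) with hs_def
  have hgoalS : (∑ e ∈ E, (1 / τ) * (∫ t in (0:ℝ)..τ,
      ((Z e.1 e.2 t - (m e.1 t * w e.1 e.2 t - m e.2 t * w e.2 e.1 t)) ^ 2
          / (pi e.1 t * w e.1 e.2 t - pi e.2 t * w e.2 e.1 t)) *
        Real.log ((pi e.1 t * w e.1 e.2 t) / (pi e.2 t * w e.2 e.1 t))))
      = ∑ e ∈ E, s e := rfl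
  have hswapsum : ∀ F : V × V → ℝ, ∑ e ∈ E, F e = ∑ e ∈ E, F e.swap := by
    intro F
    apply Finset.sum_equiv (Equiv.prodComm V V)
    · rintro ⟨i, j⟩
      simpa using hE_symm i j
    · rintro ⟨i, j⟩ _
      rfl
  have h8 : 8 * K₀ ≤ ∑ e ∈ E, s e := by
    have hpair : ∀ e ∈ E, 8 * k e + 8 * k e.swap ≤ s e + s e.swap := by
      rintro ⟨i, j⟩ he
      have hji := (hE_symm i j).1 he
      simp only [Prod.swap_prod_mk]
      have hint1 : IntervalIntegrable
          (fun t => (cc i j t)^2 / (2*(pi i t * w i j t))) MeasureTheory.volume 0 τ := by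
        apply Continuous.intervalIntegrable
        apply Continuous.div ((hcc_cont i j).pow 2)
          (continuous_const.mul ((hpic i).mul (hw_cont i j)))
        intro t
        have := hq_pos i j he t
        exact mul_ne_zero two_ne_zero this.ne'
      have hint2 : IntervalIntegrable
          (fun t => (cc j i t)^2 / (2*(pi j t * w j i t))) MeasureTheory.volume 0 τ := by
        apply Continuous.intervalIntegrable
        apply Continuous.div ((hcc_cont j i).pow 2)
          (continuous_const.mul ((hpic j).mul (hw_cont j i)))
        intro t
        have := hq_pos j i hji t
        exact mul_ne_zero two_ne_zero this.ne'
      have hscont : ∀ a b : V, (a, b) ∈ E → Continuous (fun t =>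
          ((Z a b t - (m a t * w a b t - m b t * w b a t)) ^ 2
            / (pi a t * w a b t - pi b t * w b a t)) *
          Real.log ((pi a t * w a b t) / (pi b t * w b a t))) := by
        intro a b hab
        have hba := (hE_symm a b).1 hab
        apply Continuous.mul
        · apply Continuous.div
            (((hZ_cont a b).sub (((hmc a).mul (hw_cont a b)).sub ((hmc b).mul (hw_cont b a)))).pow 2)
            (((hpic a).mul (hw_cont a b)).sub ((hpic b).mul (hw_cont b a)))
            (fun t => hJ_ne a b hab t)
        · apply Continuous.log
            (Continuous.div ((hpic a).mul (hw_cont a b)) ((hpic b).mul (hw_cont b a))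
              (fun t => (hq_pos b a hba t).ne'))
          intro t
          exact (div_pos (hq_pos a b hab t) (hq_pos b a hba t)).ne'
      have hcomb1 : 8 * k (i, j) + 8 * k (j, i)
          = (1/τ) * ∫ t in (0:ℝ)..τ,
            (8 * ((cc i j t)^2 / (2*(pi i t * w i j t)))
              + 8 * ((cc j i t)^2 / (2*(pi j t * w j i t)))) := by
        rw [intervalIntegral.integral_add (hint1.const_mul 8) (hint2.const_mul 8),
          intervalIntegral.integral_const_mul, intervalIntegral.integral_const_mul]
        simp only [hk_def]
        ring
      have hcomb2 : s (i, j) + s (j, i)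
          = (1/τ) * ∫ t in (0:ℝ)..τ,
            (((Z i j t - (m i t * w i j t - m j t * w j i t)) ^ 2
                / (pi i t * w i j t - pi j t * w j i t)) *
              Real.log ((pi i t * w i j t) / (pi j t * w j i t))
            + ((Z j i t - (m j t * w j i t - m i t * w i j t)) ^ 2
                / (pi j t * w j i t - pi i t * w i j t)) *
              Real.log ((pi j t * w j i t) / (pi i t * w i j t))) := by
        rw [intervalIntegral.integral_add ((hscont i j he).intervalIntegrable 0 τ)
          ((hscont j i hji).intervalIntegrable 0 τ)]
        simp only [hs_def]
        ring
      rw [hcomb1, hcomb2]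
      apply mul_le_mul_of_nonneg_left ?_ (by positivity : (0:ℝ) ≤ 1/τ)
      apply intervalIntegral.integral_mono_on hτ.le
        ((hint1.const_mul 8).add (hint2.const_mul 8))
        (((hscont i j he).intervalIntegrable 0 τ).add ((hscont j i hji).intervalIntegrable 0 τ))
      intro t _
      have hqv := hq_pos i j he t
      have hpv := hq_pos j i hji t
      have hJ := hJ_ne i j he t
      have hCanti : Z j i t - (m j t * w j i t - m i t * w i j t)
          = -(Z i j t - (m i t * w i j t - m j t * w j i t)) := by
        rw [hZ_anti j i t]
        ring
      have hcc1 : cc i j t = (Z i j t - (m i t * w i j t - m j t * w j i t))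
          * (pi i t * w i j t) / (pi i t * w i j t + pi j t * w j i t) := by
        simp only [hcc_def, if_pos he]
      have hcc2 : cc j i t = -(Z i j t - (m i t * w i j t - m j t * w j i t))
          * (pi j t * w j i t) / (pi j t * w j i t + pi i t * w i j t) := by
        simp only [hcc_def, if_pos hji]
        rw [hCanti]
      rw [hcc1, hcc2, hCanti]
      have hPI := pair_ineq hqv hpv hJ
        (C := Z i j t - (m i t * w i j t - m j t * w j i t))
      refine le_trans (le_of_eq ?_) (hPI.trans (le_of_eq ?_))
      · ring
      · ring
    have h1 : ∑ e ∈ E, (8 * k e + 8 * k e.swap) ≤ ∑ e ∈ E, (s e + s e.swap) :=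
      Finset.sum_le_sum hpair
    rw [Finset.sum_add_distrib, Finset.sum_add_distrib,
      ← hswapsum (fun e => 8 * k e), ← hswapsum s, ← Finset.mul_sum] at h1
    linarith
  have hfinal_cmp : K₀ / y0 ^ 2 ≤ (1 / (8 * y0 ^ 2)) * ∑ e ∈ E, s e := by
    have h2 : (1 / (8 * y0 ^ 2)) * ∑ e ∈ E, s e = ((∑ e ∈ E, s e) / 8) / y0 ^ 2 := by
      ring
    rw [h2]
    gcongr
    linarith
  -- limsup conclusion
  have hlim : ∀ ε : ℝ, 0 < ε →
      Filter.limsup (fun y : ℝ => Iag y / ENNReal.ofReal ((y - y0) ^ 2)) (𝓝[≠] y0)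
        ≤ ENNReal.ofReal (K₀ / y0 ^ 2 + ε) := by
    intro ε hε
    obtain ⟨η, hη, hkey⟩ := key ε hε
    apply Filter.limsup_le_of_le (by isBoundedDefault)
    have h1 : ∀ᶠ y in 𝓝[≠] y0, |y - y0| ≤ η := by
      apply eventually_nhdsWithin_of_eventually_nhds
      filter_upwards [Metric.closedBall_mem_nhds y0 hη] with y hy
      rwa [Metric.mem_closedBall, Real.dist_eq] at hy
    have h2 : ∀ᶠ y in 𝓝[≠] y0, y ≠ y0 := eventually_mem_nhdsWithin
    filter_upwards [h1, h2] with y hy hyne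
    apply ENNReal.div_le_of_le_mul
    rw [← ENNReal.ofReal_mul (by positivity : (0:ℝ) ≤ K₀ / y0 ^ 2 + ε)]
    exact hkey y hy
  have hlim2 : Filter.limsup (fun y : ℝ => Iag y / ENNReal.ofReal ((y - y0) ^ 2)) (𝓝[≠] y0)
      ≤ ENNReal.ofReal (K₀ / y0 ^ 2) := by
    apply ENNReal.le_of_forall_pos_le_add
    intro ε hε _
    calc Filter.limsup (fun y : ℝ => Iag y / ENNReal.ofReal ((y - y0) ^ 2)) (𝓝[≠] y0)
        ≤ ENNReal.ofReal (K₀ / y0 ^ 2 + ε) := hlim ε (by exact_mod_cast hε)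
    _ = ENNReal.ofReal (K₀ / y0 ^ 2) + ENNReal.ofReal ε :=
        ENNReal.ofReal_add (by positivity) (ε.coe_nonneg)
    _ = ENNReal.ofReal (K₀ / y0 ^ 2) + ε := by rw [ENNReal.ofReal_coe_nnreal]
  rw [hgoalS]
  exact hlim2.trans (ENNReal.ofReal_le_ofReal hfinal_cmp)
end

section
/- Corollary (global quadratic bound with the constant σ*). Assume in addition that 𝒥_{ij}(t) ≠ 0 for all (i,j) ∈ E and all t. Suppose 𝒦_{ij} : ℝ → ℝ ((i,j) ∈ V × V) are continuous τ-periodic functions with 𝒦_{ij}(t) = −𝒦_{ji}(t) for all i,j,t, identically zero when (i,j) ∉ E, satisfying Σ_{j∈V} 𝒦_{ij}(t) = 0 for all i and t, and such that K := (1/τ)∫₀^τ (1/2)Σ_{(i,j)∈V×V} α_{ij}(t)𝒦_{ij}(t) dt ≠ 0. Define σ* := (1/2) Σ_{(i,j)∈E} (1/τ)∫₀^τ [𝒦_{ij}(t)²/𝒥_{ij}(t)] · log(𝒬_{ij}(t)/𝒬_{ji}(t)) dt. Then for EVERY y ∈ ℝ it holds I_{α,γ}(y) ≤ (1/4) ·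 (σ*/K²) · (y − y_{α,γ})² (an inequality in [0,∞]; this bound is global, with no error term). -/
open MeasureTheory Filter
open scoped Topology ENNReal

/-! ### Auxiliary real-analysis lemmas -/

noncomputable def phir (u p : ℝ) : ℝ := u * Real.log (u / p) - u + p

lemma phir_nonneg {u p : ℝ} (hu : 0 ≤ u) (hp : 0 < p) : 0 ≤ phir u p := by
  rcases eq_or_lt_of_le hu with h | h
  · simp [phir, ← h, hp.le]
  · have hlog : Real.log (p / u) ≤ p / u - 1 :=
      Real.log_le_sub_one_of_pos (by positivity)
    have h1 : Real.log (u / p) = - Real.log (p / u) := by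
      rw [← Real.log_inv]; congr 1; field_simp
    have h2 : u * (1 - p / u) = u - p := by field_simp
    unfold phir
    nlinarith [mul_le_mul_of_nonneg_left hlog h.le]

lemma Phi_eq_ofReal_phir {u p : ℝ} (hu : 0 ≤ u) (hp : 0 < p) :
    Phi u p = ENNReal.ofReal (phir u p) := by
  unfold Phi phir
  rcases eq_or_lt_of_le hu with h | h
  · simp [← h]
  · rw [if_neg h.ne', if_neg hp.ne']

lemma my_sinh_le_mul_cosh {t : ℝ} (ht : 0 ≤ t) : Real.sinh t ≤ t * Real.cosh t := by
  have key : MonotoneOn (fun t => t * Real.cosh t - Real.sinh t) (Set.Ici (0:ℝ)) := by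
    apply monotoneOn_of_deriv_nonneg (convex_Ici 0)
    · exact (((continuous_id.mul Real.continuous_cosh).sub Real.continuous_sinh)).continuousOn
    · intro x _
      exact (((differentiable_id.mul Real.differentiable_cosh).sub
        Real.differentiable_sinh) x).differentiableWithinAt
    · intro x hx
      have hD : HasDerivAt (fun t => t * Real.cosh t - Real.sinh t) (x * Real.sinh x) x := by
        have h1 : HasDerivAt (fun t : ℝ => t * Real.cosh t)
            (1 * Real.cosh x + x * Real.sinh x) x :=
          (hasDerivAt_id x).mul (Real.hasDerivAt_cosh x)
        have := h1.sub (Real.hasDerivAt_sinh x)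
        exact this.congr_deriv (by ring)
      rw [hD.deriv]
      have hx0 : (0:ℝ) ≤ x := le_of_lt (by simpa using hx)
      exact mul_nonneg hx0 (Real.sinh_nonneg_iff.2 hx0)
  have h0 := key (Set.self_mem_Ici) (Set.mem_Ici.2 ht) ht
  simpa using h0

lemma my_sinh_div_mono {u v : ℝ} (hu : 0 ≤ u) (huv : u ≤ v) :
    v * Real.sinh u ≤ u * Real.sinh v := by
  rcases eq_or_lt_of_le hu with h | h
  · simp [← h]
  · have key : MonotoneOn (fun t => u * Real.sinh t - t * Real.sinh u) (Set.Ici u) := by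
      apply monotoneOn_of_deriv_nonneg (convex_Ici u)
      · exact ((continuous_const.mul Real.continuous_sinh).sub
          (continuous_id.mul continuous_const)).continuousOn
      · intro x _
        exact (((differentiable_const u).mul Real.differentiable_sinh).sub
          (differentiable_id.mul (differentiable_const _)) x).differentiableWithinAt
      · intro x hx
        have hD : HasDerivAt (fun t => u * Real.sinh t - t * Real.sinh u)
            (u * Real.cosh x - Real.sinh u) x := by
          have h1 := (Real.hasDerivAt_sinh x).const_mul u
          have h2 : HasDerivAt (fun t : ℝ => t * Real.sinh u) (Real.sinh u) x := by
            simpa using (hasDerivAt_id x).mul_const (Real.sinh u)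
          exact h1.sub h2
        rw [hD.deriv]
        have hxu : u ≤ x := le_of_lt (by simpa using hx)
        have h3 : Real.sinh u ≤ u * Real.cosh u := my_sinh_le_mul_cosh hu
        have h4 : Real.cosh u ≤ Real.cosh x := by
          rw [Real.cosh_le_cosh]
          rwa [abs_of_nonneg hu, abs_of_nonneg (hu.trans hxu)]
        nlinarith
    have h0 := key (Set.self_mem_Ici) (Set.mem_Ici.2 huv) huv
    simp only [sub_self] at h0
    nlinarith

lemma my_mul_arsinh_le {x a : ℝ} (hx : 0 ≤ x) (hxa : x ≤ a) :
    x * Real.arsinh a ≤ a * Real.arsinh x := by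
  have h1 : (0:ℝ) ≤ Real.arsinh x := Real.arsinh_nonneg_iff.2 hx
  have h2 : Real.arsinh x ≤ Real.arsinh a := Real.arsinh_le_arsinh.2 hxa
  have := my_sinh_div_mono h1 h2
  rw [Real.sinh_arsinh, Real.sinh_arsinh] at this
  linarith

noncomputable def Af (x : ℝ) : ℝ := x * Real.arsinh x - Real.sqrt (1 + x ^ 2)

lemma hasDerivAt_Af (x : ℝ) : HasDerivAt Af (Real.arsinh x) x := by
  have hpos : (0:ℝ) < 1 + x ^ 2 := by positivity
  have h1 : HasDerivAt (fun x : ℝ => x * Real.arsinh x)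
      (1 * Real.arsinh x + x * (Real.sqrt (1 + x ^ 2))⁻¹) x :=
    (hasDerivAt_id x).mul (Real.hasDerivAt_arsinh x)
  have hin : HasDerivAt (fun x : ℝ => 1 + x ^ 2) (2 * x) x := by
    simpa using ((hasDerivAt_pow 2 x).const_add 1)
  have hs : Real.sqrt (1 + x ^ 2) ≠ 0 := by positivity
  have h2 : HasDerivAt (fun x : ℝ => Real.sqrt (1 + x ^ 2))
      (x / Real.sqrt (1 + x ^ 2)) x := by
    have := (Real.hasDerivAt_sqrt hpos.ne').comp x hin
    refine this.congr_deriv ?_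
    field_simp
  have h3 := h1.sub h2
  refine h3.congr_deriv ?_
  field_simp
  ring

lemma Af_le {a x : ℝ} (ha : 0 < a) :
    Af x - Af a - (x - a) * Real.arsinh a ≤ (x - a) ^ 2 * Real.arsinh a / (2 * a) := by
  set V := Real.arsinh a with hV
  set D : ℝ → ℝ := fun x => (x - a) ^ 2 * V / (2 * a) + (x - a) * V + Af a - Af x with hD
  have hDa : D a = 0 := by simp [hD]
  have hDna : D (-a) = 0 := by
    have : Af (-a) = Af a := by
      unfold Af; rw [Real.arsinh_neg, neg_sq]; ring
    simp only [hD, this]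
    field_simp
    ring
  have hderiv : ∀ x : ℝ, HasDerivAt D (x / a * V - Real.arsinh x) x := by
    intro x
    have h1 : HasDerivAt (fun x : ℝ => (x - a) ^ 2 * V / (2 * a) + (x - a) * V + Af a)
        ((2 * (x - a) * 1) * V / (2 * a) + 1 * V) x := by
      have ha1 : HasDerivAt (fun x : ℝ => x - a) 1 x := (hasDerivAt_id x).sub_const a
      have ha2 := ((ha1.pow 2).mul_const V).div_const (2 * a)
      have ha3 := ha1.mul_const V
      simpa using ((ha2.add ha3).add_const (Af a))
    have := h1.sub (hasDerivAt_Af x)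
    refine this.congr_deriv ?_
    field_simp
    ring
  have hsign_pos : ∀ t : ℝ, a ≤ t → 0 ≤ t / a * V - Real.arsinh t := by
    intro t ht
    have h := my_mul_arsinh_le (le_of_lt ha) ht
    have h2 : Real.arsinh t ≤ t / a * V := by
      rw [div_mul_eq_mul_div, le_div_iff₀ ha]; linarith
    linarith
  have hsign_mid : ∀ t : ℝ, 0 ≤ t → t ≤ a → t / a * V - Real.arsinh t ≤ 0 := by
    intro t ht hta
    have := my_mul_arsinh_le ht hta
    have h2 : t / a * V ≤ Real.arsinh t := by
      rw [div_mul_eq_mul_div, div_le_iff₀ ha]; linarith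
    linarith
  have hsign_midneg : ∀ t : ℝ, -a ≤ t → t ≤ 0 → 0 ≤ t / a * V - Real.arsinh t := by
    intro t ht hta
    have h := hsign_mid (-t) (by linarith) (by linarith)
    rw [Real.arsinh_neg] at h
    have h2 : -t / a * V = -(t / a * V) := by ring
    rw [h2] at h
    linarith
  have hsign_neg : ∀ t : ℝ, t ≤ -a → t / a * V - Real.arsinh t ≤ 0 := by
    intro t ht
    have h := hsign_pos (-t) (by linarith)
    rw [Real.arsinh_neg] at h
    have h2 : -t / a * V = -(t / a * V) := by ring
    rw [h2] at h
    linarith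
  have hdiff : Differentiable ℝ D := fun x => (hderiv x).differentiableAt
  have hcont : Continuous D := hdiff.continuous
  have main : 0 ≤ D x := by
    rcases le_total a x with hax | hxa
    · have mono : MonotoneOn D (Set.Icc a x) := by
        apply monotoneOn_of_deriv_nonneg (convex_Icc a x) hcont.continuousOn
          (hdiff.differentiableOn)
        intro t ht
        rw [interior_Icc] at ht
        rw [(hderiv t).deriv]
        exact hsign_pos t ht.1.le
      have := mono (Set.left_mem_Icc.2 hax) (Set.right_mem_Icc.2 hax) hax
      rw [hDa] at this; exact this
    rcases le_total 0 x with h0x | hx0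
    · have anti : AntitoneOn D (Set.Icc x a) := by
        apply antitoneOn_of_deriv_nonpos (convex_Icc x a) hcont.continuousOn
          (hdiff.differentiableOn)
        intro t ht
        rw [interior_Icc] at ht
        rw [(hderiv t).deriv]
        exact hsign_mid t (le_trans h0x ht.1.le) ht.2.le
      have := anti (Set.left_mem_Icc.2 hxa) (Set.right_mem_Icc.2 hxa) hxa
      rw [hDa] at this; exact this
    rcases le_total (-a) x with hax2 | hxa2
    · have mono : MonotoneOn D (Set.Icc (-a) x) := by
        apply monotoneOn_of_deriv_nonneg (convex_Icc _ _) hcont.continuousOn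
          (hdiff.differentiableOn)
        intro t ht
        rw [interior_Icc] at ht
        rw [(hderiv t).deriv]
        exact hsign_midneg t ht.1.le (ht.2.le.trans hx0)
      have := mono (Set.left_mem_Icc.2 hax2) (Set.right_mem_Icc.2 hax2) hax2
      rw [hDna] at this; exact this
    · have anti : AntitoneOn D (Set.Icc x (-a)) := by
        apply antitoneOn_of_deriv_nonpos (convex_Icc _ _) hcont.continuousOn
          (hdiff.differentiableOn)
        intro t ht
        rw [interior_Icc] at ht
        rw [(hderiv t).deriv]
        exact hsign_neg t ht.2.le
      have := anti (Set.left_mem_Icc.2 hxa2) (Set.right_mem_Icc.2 hxa2) hxa2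
      rw [hDna] at this; exact this
  simp only [hD] at main
  linarith

lemma sqrt_eq_of_sq {y z : ℝ} (hz : 0 ≤ z) (h : z ^ 2 = y) : Real.sqrt y = z := by
  rw [← h, Real.sqrt_sq hz]

set_option maxHeartbeats 1000000 in
lemma psi_core {q q' C : ℝ} (hq' : 0 < q') (hlt : q' < q) :
    phir ((C + Real.sqrt (C ^ 2 + 4 * (q * q'))) / 2) q +
      phir ((Real.sqrt (C ^ 2 + 4 * (q * q')) - C) / 2) q' ≤
    (C - (q - q')) ^ 2 * Real.log (q / q') / (4 * (q - q')) := by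
  have hq : 0 < q := hq'.trans hlt
  set S := Real.sqrt (C ^ 2 + 4 * (q * q')) with hSdef
  have hm : 0 < Real.sqrt (q * q') := Real.sqrt_pos.2 (by positivity)
  obtain ⟨m, hmdef⟩ : ∃ m : ℝ, m = Real.sqrt (q * q') := ⟨_, rfl⟩
  rw [← hmdef] at hm
  have hm2 : m ^ 2 = q * q' := by rw [hmdef]; exact Real.sq_sqrt (by positivity)
  obtain ⟨a, hadef⟩ : ∃ a : ℝ, a = (q - q') / (2 * m) := ⟨_, rfl⟩
  obtain ⟨x, hxdef⟩ : ∃ x : ℝ, x = C / (2 * m) := ⟨_, rfl⟩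
  have ha : 0 < a := by rw [hadef]; exact div_pos (by linarith) (by linarith)
  obtain ⟨V, hVdef⟩ : ∃ V : ℝ, V = Real.arsinh a := ⟨_, rfl⟩
  obtain ⟨X, hXdef⟩ : ∃ X : ℝ, X = Real.arsinh x := ⟨_, rfl⟩
  have hS0 : 0 ≤ S := Real.sqrt_nonneg _
  have hS2 : S ^ 2 = C ^ 2 + 4 * (q * q') := Real.sq_sqrt (by positivity)
  have hCS : 0 < C + S := by nlinarith [abs_nonneg C, sq_abs C, le_abs_self C]
  have hsa : Real.sqrt (1 + a ^ 2) = (q + q') / (2 * m) := by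
    apply sqrt_eq_of_sq (by positivity)
    rw [hadef]
    field_simp
    linarith [hm2]
  have hsx : Real.sqrt (1 + x ^ 2) = S / (2 * m) := by
    apply sqrt_eq_of_sq (by positivity)
    rw [hxdef]
    field_simp
    linarith [hS2, hm2]
  have hexpV : Real.exp V = q / m := by
    rw [hVdef, Real.exp_arsinh, hsa]
    rw [hadef]
    field_simp
    linarith [hm2]
  have hexpnegV : Real.exp (-V) = q' / m := by
    rw [Real.exp_neg, hexpV]
    rw [inv_div, div_eq_div_iff hq.ne' (by positivity : (m:ℝ) ≠ 0)]
    linarith [hm2]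
  have hexpX : Real.exp X = (C + S) / (2 * m) := by
    rw [hXdef, Real.exp_arsinh, hsx, hxdef]
    ring
  have hexpnegX : Real.exp (-X) = (S - C) / (2 * m) := by
    rw [Real.exp_neg, hexpX, inv_div,
      div_eq_div_iff (by positivity : (C+S:ℝ) ≠ 0) (by positivity : (2*m:ℝ) ≠ 0)]
    nlinarith [hS2, hm2]
  have hlogQq : Real.log ((C + S) / 2 / q) = X - V := by
    have : (C + S) / 2 / q = Real.exp (X - V) := by
      rw [Real.exp_sub, hexpX, hexpV]
      field_simp
    rw [this, Real.log_exp]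
  have hQ'pos : 0 < (S - C) / 2 := by
    have : Real.exp (-X) > 0 := Real.exp_pos _
    rw [hexpnegX] at this
    have h2m : 0 < 2 * m := by linarith
    nlinarith [div_pos_iff.1 this]
  have hlogQ'q' : Real.log ((S - C) / 2 / q') = V - X := by
    have : (S - C) / 2 / q' = Real.exp (V - X) := by
      rw [Real.exp_sub, hexpV, hexpX]
      rw [div_div]
      field_simp
      linear_combination hS2
    rw [this, Real.log_exp]
  have hQeq : phir ((C + S) / 2) q = (C + S) / 2 * (X - V) - (C + S) / 2 + q := by
    unfold phir; rw [hlogQq]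
  have hQ'eq : phir ((S - C) / 2) q' = (S - C) / 2 * (V - X) - (S - C) / 2 + q' := by
    unfold phir; rw [hlogQ'q']
  have hC : C = 2 * m * x := by rw [hxdef]; field_simp
  have hj : q - q' = 2 * m * a := by rw [hadef]; field_simp
  have hSx : S = 2 * m * Real.sqrt (1 + x ^ 2) := by rw [hsx]; field_simp
  have hqq : q + q' = 2 * m * Real.sqrt (1 + a ^ 2) := by rw [hsa]; field_simp
  have hqe : q = m * Real.sqrt (1 + a ^ 2) + m * a := by linarith
  have hq'e : q' = m * Real.sqrt (1 + a ^ 2) - m * a := by linarith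
  have hlogqq' : Real.log (q / q') = 2 * V := by
    have h2 : q / q' = Real.exp (2 * V) := by
      rw [show (2:ℝ) * V = V + V by ring, Real.exp_add, hexpV]
      field_simp
      linear_combination hm2
    rw [h2, Real.log_exp]
  have key := Af_le (a := a) (x := x) ha
  rw [← hVdef] at key
  rw [hlogqq']
  calc phir ((C + S) / 2) q + phir ((S - C) / 2) q'
      = 2 * m * (Af x - Af a - (x - a) * V) := by
        rw [hQeq, hQ'eq]
        unfold Af
        rw [← hXdef, ← hVdef, hqe, hq'e, hC, hSx]
        ring
    _ ≤ 2 * m * ((x - a) ^ 2 * V / (2 * a)) := by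
        apply mul_le_mul_of_nonneg_left key (by positivity)
    _ = (C - (q - q')) ^ 2 * (2 * V) / (4 * (q - q')) := by
        rw [hC, hj]
        field_simp
        ring

lemma psi_core' {q q' C : ℝ} (hq : 0 < q) (hq' : 0 < q') (hne : q ≠ q') :
    phir ((C + Real.sqrt (C ^ 2 + 4 * (q * q'))) / 2) q +
      phir ((Real.sqrt (C ^ 2 + 4 * (q * q')) - C) / 2) q' ≤
    (C - (q - q')) ^ 2 * Real.log (q / q') / (4 * (q - q')) := by
  rcases lt_or_gt_of_ne hne with h | h
  · have key := psi_core (q := q') (q' := q) (C := -C) hq h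
    rw [show ((-C)^2 + 4*(q'*q)) = C^2 + 4*(q*q') from by ring] at key
    rw [show (-C + Real.sqrt (C^2+4*(q*q')))/2 = (Real.sqrt (C^2+4*(q*q')) - C)/2 from by ring,
        show (Real.sqrt (C^2+4*(q*q')) - -C)/2 = (C + Real.sqrt (C^2+4*(q*q')))/2 from by ring]
      at key
    have hr : (-C - (q' - q))^2 * Real.log (q'/q) / (4*(q'-q))
        = (C - (q-q'))^2 * Real.log (q/q') / (4*(q-q')) := by
      rw [show Real.log (q'/q) = - Real.log (q/q') from by
        rw [← Real.log_inv]; congr 1; field_simp]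
      have h1 : q' - q ≠ 0 := sub_ne_zero.2 hne.symm
      have h2 : q - q' ≠ 0 := sub_ne_zero.2 hne
      field_simp
      ring
    rw [hr] at key
    linarith
  · exact psi_core hq' h

theorem stmt7
    {V : Type} [Fintype V] [Nonempty V]
    (E : Finset (V × V)) (hE : ∀ i : V, (i, i) ∉ E)
    (hE_symm : ∀ i j : V, (i, j) ∈ E ↔ (j, i) ∈ E)
    (τ : ℝ) (hτ : 0 < τ)
    (w : V → V → ℝ → ℝ)
    (hw_cont : ∀ i j, Continuous (w i j))
    (hw_per : ∀ i j, Function.Periodic (w i j) τ)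
    (hw_pos : ∀ i j, (i, j) ∈ E → ∀ t, 0 < w i j t)
    (hw_zero : ∀ i j, (i, j) ∉ E → ∀ t, w i j t = 0)
    (pi : V → ℝ → ℝ)
    (hpi_diff : ∀ i, ContDiff ℝ 1 (pi i))
    (hpi_per : ∀ i, Function.Periodic (pi i) τ)
    (hpi_pos : ∀ i t, 0 < pi i t)
    (hpi_sum : ∀ t : ℝ, ∑ i, pi i t = 1)
    (hpi_cont_eq : ∀ i t, deriv (pi i) t
      + (∑ j, pi i t * w i j t) - (∑ j, pi j t * w j i t) = 0)
    (hJ_ne : ∀ i j, (i, j) ∈ E → ∀ t : ℝ,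
      pi i t * w i j t - pi j t * w j i t ≠ 0)
    (α : V → V → ℝ → ℝ)
    (hα_cont : ∀ i j, Continuous (α i j))
    (hα_per : ∀ i j, Function.Periodic (α i j) τ)
    (hα_anti : ∀ i j (t : ℝ), α i j t = - α j i t)
    (γ : V → ℝ → ℝ)
    (hγ_cont : ∀ i, Continuous (γ i))
    (hγ_per : ∀ i, Function.Periodic (γ i) τ)
    (y0 : ℝ)
    (hy0 : y0 = (1 / τ) * (∫ t in (0:ℝ)..τ,
      ((∑ i, ∑ j, α i j t * (pi i t * w i j t)) + ∑ i, γ i t * pi i t)))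
    (hy0_ne : y0 ≠ 0)
    (Iag : ℝ → ℝ≥0∞)
    (hI : ∀ y : ℝ, Iag y = sInf { c : ℝ≥0∞ |
      ∃ (Q : V → V → ℝ → ℝ) (ρ : V → ℝ → ℝ),
        (∀ i j, Continuous (Q i j)) ∧
        (∀ i j, Function.Periodic (Q i j) τ) ∧
        (∀ i j t, 0 ≤ Q i j t) ∧
        (∀ i j, (i, j) ∉ E → ∀ t, Q i j t = 0) ∧
        (∀ i, ContDiff ℝ 1 (ρ i)) ∧
        (∀ i, Function.Periodic (ρ i) τ) ∧
        (∀ i t, 0 ≤ ρ i t) ∧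
        (∀ t : ℝ, ∑ i, ρ i t = 1) ∧
        (∀ i t, deriv (ρ i) t + (∑ j, Q i j t) - (∑ j, Q j i t) = 0) ∧
        ((1 / τ) * (∫ t in (0:ℝ)..τ,
          ((∑ i, ∑ j, α i j t * Q i j t) + ∑ i, γ i t * ρ i t)) = y) ∧
        c = ∑ e ∈ E, ENNReal.ofReal (1 / τ) *
          (∫⁻ t in Set.Ioc (0:ℝ) τ, Phi (Q e.1 e.2 t) (ρ e.1 t * w e.1 e.2 t)) })
    -- the divergence-free current 𝒦
    (K : V → V → ℝ → ℝ)
    (hK_cont : ∀ i j, Continuous (K i j))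
    (hK_per : ∀ i j, Function.Periodic (K i j) τ)
    (hK_anti : ∀ i j (t : ℝ), K i j t = - K j i t)
    (hK_zero : ∀ i j, (i, j) ∉ E → ∀ t, K i j t = 0)
    (hK_div : ∀ i (t : ℝ), (∑ j, K i j t) = 0)
    (Kav : ℝ)
    (hKav : Kav = (1 / τ) * (∫ t in (0:ℝ)..τ, (1 / 2) * ∑ i, ∑ j, α i j t * K i j t))
    (hKav_ne : Kav ≠ 0)
    (σstar : ℝ)
    (hσstar : σstar = (1 / 2) * ∑ e ∈ E, (1 / τ) * (∫ t in (0:ℝ)..τ,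
      ((K e.1 e.2 t) ^ 2 / (pi e.1 t * w e.1 e.2 t - pi e.2 t * w e.2 e.1 t)) *
        Real.log ((pi e.1 t * w e.1 e.2 t) / (pi e.2 t * w e.2 e.1 t)))) :
    ∀ y : ℝ, Iag y ≤ ENNReal.ofReal ((1 / 4) * (σstar / Kav ^ 2) * (y - y0) ^ 2) := by
  intro y
  obtain ⟨c, hc⟩ : ∃ c : ℝ, c = (y - y0) / Kav := ⟨_, rfl⟩
  have hcK : c * Kav = y - y0 := by rw [hc]; field_simp
  -- basic positivity facts
  have hw_nonneg : ∀ i j t, 0 ≤ w i j t := by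
    intro i j t
    by_cases h : (i, j) ∈ E
    · exact (hw_pos i j h t).le
    · rw [hw_zero i j h t]
  have hq_nonneg : ∀ i j t, 0 ≤ pi i t * w i j t :=
    fun i j t => mul_nonneg (hpi_pos i t).le (hw_nonneg i j t)
  have hq_pos : ∀ i j, (i, j) ∈ E → ∀ t, 0 < pi i t * w i j t :=
    fun i j h t => mul_pos (hpi_pos i t) (hw_pos i j h t)
  have hpic : ∀ i, Continuous (pi i) := fun i => (hpi_diff i).continuous
  -- the perturbed current and traffic
  obtain ⟨Cf, hCf⟩ : ∃ F : V → V → ℝ → ℝ, F = fun i j t =>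
      (pi i t * w i j t - pi j t * w j i t) + c * K i j t := ⟨_, rfl⟩
  obtain ⟨Qf, hQf⟩ : ∃ F : V → V → ℝ → ℝ, F = fun i j t =>
      (Cf i j t + Real.sqrt ((Cf i j t) ^ 2 + 4 * (pi i t * w i j t * (pi j t * w j i t)))) / 2 :=
    ⟨_, rfl⟩
  have hCf_anti : ∀ i j t, Cf j i t = - Cf i j t := by
    intro i j t
    simp only [hCf]
    rw [hK_anti j i t]
    ring
  have hCf_cont : ∀ i j, Continuous (Cf i j) := by
    intro i j
    rw [hCf]
    exact (((hpic i).mul (hw_cont i j)).sub ((hpic j).mul (hw_cont j i))).add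
      (continuous_const.mul (hK_cont i j))
  have hQf_cont : ∀ i j, Continuous (Qf i j) := by
    intro i j
    rw [hQf]
    apply Continuous.div_const
    apply (hCf_cont i j).add
    apply Real.continuous_sqrt.comp
    exact (((hCf_cont i j).pow 2).add (continuous_const.mul
      (((hpic i).mul (hw_cont i j)).mul ((hpic j).mul (hw_cont j i)))))
  have hQf_per : ∀ i j, Function.Periodic (Qf i j) τ := by
    intro i j t
    simp only [hQf, hCf, hpi_per i t, hpi_per j t, hw_per i j t, hw_per j i t, hK_per i j t]
  have hQf_nonneg : ∀ i j t, 0 ≤ Qf i j t := by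
    intro i j t
    simp only [hQf]
    have h1 : Real.sqrt ((Cf i j t) ^ 2) ≤
        Real.sqrt ((Cf i j t) ^ 2 + 4 * (pi i t * w i j t * (pi j t * w j i t))) := by
      apply Real.sqrt_le_sqrt
      nlinarith [hq_nonneg i j t, hq_nonneg j i t]
    rw [Real.sqrt_sq_eq_abs] at h1
    have := neg_abs_le (Cf i j t)
    linarith
  have hQf_zero : ∀ i j, (i, j) ∉ E → ∀ t, Qf i j t = 0 := by
    intro i j h t
    have hji : (j, i) ∉ E := fun hmem => h ((hE_symm i j).2 hmem)
    simp only [hQf, hCf, hw_zero i j h t, hw_zero j i hji t, hK_zero i j h t]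
    norm_num
  have hQf_sub : ∀ i j t, Qf i j t - Qf j i t = Cf i j t := by
    intro i j t
    simp only [hQf]
    rw [hCf_anti i j t]
    rw [show (- Cf i j t) ^ 2 + 4 * (pi j t * w j i t * (pi i t * w i j t)) =
      (Cf i j t) ^ 2 + 4 * (pi i t * w i j t * (pi j t * w j i t)) from by ring]
    ring
  have hQf_pos : ∀ i j, (i, j) ∈ E → ∀ t, 0 < Qf i j t := by
    intro i j h t
    have hji : (j, i) ∈ E := (hE_symm i j).1 h
    have hqq : 0 < pi i t * w i j t * (pi j t * w j i t) :=
      mul_pos (hq_pos i j h t) (hq_pos j i hji t)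
    simp only [hQf]
    have hS2 : Real.sqrt ((Cf i j t) ^ 2 + 4 * (pi i t * w i j t * (pi j t * w j i t))) ^ 2
        = (Cf i j t) ^ 2 + 4 * (pi i t * w i j t * (pi j t * w j i t)) :=
      Real.sq_sqrt (by nlinarith)
    have hS0 := Real.sqrt_nonneg ((Cf i j t) ^ 2 + 4 * (pi i t * w i j t * (pi j t * w j i t)))
    nlinarith [neg_abs_le (Cf i j t), sq_abs (Cf i j t), abs_nonneg (Cf i j t)]
  have hτ' : (τ:ℝ) ≠ 0 := hτ.ne'
  -- continuity equation for the witness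
  have hQf_conteq : ∀ i t, deriv (pi i) t + (∑ j, Qf i j t) - (∑ j, Qf j i t) = 0 := by
    intro i t
    have h1 : (∑ j, Qf i j t) - (∑ j, Qf j i t) = ∑ j, Cf i j t := by
      rw [← Finset.sum_sub_distrib]
      exact Finset.sum_congr rfl fun j _ => hQf_sub i j t
    have h2 : ∑ j, Cf i j t = (∑ j, pi i t * w i j t) - (∑ j, pi j t * w j i t) := by
      simp only [hCf]
      rw [Finset.sum_add_distrib, ← Finset.mul_sum, hK_div i t, Finset.sum_sub_distrib]
      ring
    have h3 := hpi_cont_eq i t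
    linarith
  -- the swap identity for sums against α
  have hswap : ∀ (t : ℝ) (f : V → V → ℝ),
      (∑ i, ∑ j, α i j t * f j i) = - ∑ i, ∑ j, α i j t * f i j := by
    intro t f
    calc (∑ i, ∑ j, α i j t * f j i) = ∑ j, ∑ i, α i j t * f j i := Finset.sum_comm
      _ = ∑ x, ∑ y, -(α x y t * f x y) := by
          refine Finset.sum_congr rfl fun x _ => Finset.sum_congr rfl fun y _ => ?_
          rw [hα_anti y x t]; ring
      _ = - ∑ x, ∑ y, α x y t * f x y := by
          simp [Finset.sum_neg_distrib]
  -- pointwise identity for the empirical average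
  have havg_pt : ∀ t, (∑ i, ∑ j, α i j t * Qf i j t)
      = (∑ i, ∑ j, α i j t * (pi i t * w i j t))
        + c * ((1/2) * ∑ i, ∑ j, α i j t * K i j t) := by
    intro t
    have h1 := hswap t (fun i j => Qf i j t)
    have h2 := hswap t (fun i j => pi i t * w i j t)
    have key : ∀ i j : V, α i j t * Qf i j t - α i j t * Qf j i t
        = (α i j t * (pi i t * w i j t) - α i j t * (pi j t * w j i t))
          + c * (α i j t * K i j t) := by
      intro i j
      have h := hQf_sub i j t
      simp only [hCf] at h
      linear_combination (α i j t) * h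
    have e1 : (∑ i, ∑ j, α i j t * Qf i j t) - (∑ i, ∑ j, α i j t * Qf j i t)
        = ((∑ i, ∑ j, α i j t * (pi i t * w i j t))
            - (∑ i, ∑ j, α i j t * (pi j t * w j i t)))
          + c * (∑ i, ∑ j, α i j t * K i j t) := by
      rw [← Finset.sum_sub_distrib]
      simp only [← Finset.sum_sub_distrib]
      rw [Finset.sum_congr rfl fun i _ => Finset.sum_congr rfl fun j _ => key i j]
      simp only [Finset.sum_add_distrib, Finset.sum_sub_distrib, ← Finset.mul_sum]
    rw [h1, h2] at e1
    linarith
  -- continuity of the integrands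
  have hcontA : Continuous (fun t => (∑ i, ∑ j, α i j t * (pi i t * w i j t))
      + ∑ i, γ i t * pi i t) := by
    apply Continuous.add
    · apply continuous_finset_sum
      intro i _
      apply continuous_finset_sum
      intro j _
      exact (hα_cont i j).mul ((hpic i).mul (hw_cont i j))
    · exact continuous_finset_sum _ fun i _ => (hγ_cont i).mul (hpic i)
  have hcontK2 : Continuous (fun t => (1/2 : ℝ) * ∑ i, ∑ j, α i j t * K i j t) := by
    apply continuous_const.mul
    exact continuous_finset_sum _ fun i _ =>
      continuous_finset_sum _ fun j _ => (hα_cont i j).mul (hK_cont i j)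
  -- the empirical average of the witness is y
  have havg : (1 / τ) * (∫ t in (0:ℝ)..τ,
      ((∑ i, ∑ j, α i j t * Qf i j t) + ∑ i, γ i t * pi i t)) = y := by
    have hptw : ∀ t : ℝ, (∑ i, ∑ j, α i j t * Qf i j t) + ∑ i, γ i t * pi i t
        = ((∑ i, ∑ j, α i j t * (pi i t * w i j t)) + ∑ i, γ i t * pi i t)
          + c * ((1/2) * ∑ i, ∑ j, α i j t * K i j t) := by
      intro t; rw [havg_pt t]; ring
    rw [intervalIntegral.integral_congr (fun t _ => hptw t)]
    rw [intervalIntegral.integral_add (hcontA.intervalIntegrable 0 τ)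
      ((show Continuous fun t => c * ((1/2 : ℝ) * ∑ i, ∑ j, α i j t * K i j t) from continuous_const.mul hcontK2).intervalIntegrable 0 τ)]
    rw [intervalIntegral.integral_const_mul]
    have e1 : (∫ t in (0:ℝ)..τ, ((∑ i, ∑ j, α i j t * (pi i t * w i j t))
        + ∑ i, γ i t * pi i t)) = τ * y0 := by
      rw [hy0]; field_simp
    have e2 : (∫ t in (0:ℝ)..τ, ((1/2 : ℝ) * ∑ i, ∑ j, α i j t * K i j t)) = τ * Kav := by
      rw [hKav]; field_simp
    rw [e1, e2]
    field_simp
    linear_combination hcK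

  -- edge cost and entropy-production integrands
  obtain ⟨ff, hff⟩ : ∃ F : V × V → ℝ → ℝ, F = fun e t =>
      phir (Qf e.1 e.2 t) (pi e.1 t * w e.1 e.2 t) := ⟨_, rfl⟩
  obtain ⟨gg, hgg⟩ : ∃ F : V × V → ℝ → ℝ, F = fun e t =>
      ((K e.1 e.2 t) ^ 2 / (pi e.1 t * w e.1 e.2 t - pi e.2 t * w e.2 e.1 t)) *
        Real.log ((pi e.1 t * w e.1 e.2 t) / (pi e.2 t * w e.2 e.1 t)) := ⟨_, rfl⟩
  have hff_cont : ∀ e ∈ E, Continuous (ff e) := by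
    intro e he
    have hq := hq_pos e.1 e.2 he
    have hQ := hQf_pos e.1 e.2 he
    have hc1 : Continuous fun t => pi e.1 t * w e.1 e.2 t := (hpic e.1).mul (hw_cont e.1 e.2)
    rw [hff]
    exact ((((hQf_cont e.1 e.2).mul
      (((hQf_cont e.1 e.2).div hc1 (fun t => (hq t).ne')).log
        (fun t => (div_pos (hQ t) (hq t)).ne'))).sub (hQf_cont e.1 e.2)).add hc1)
  have hgg_cont : ∀ e ∈ E, Continuous (gg e) := by
    intro e he
    have hji : (e.2, e.1) ∈ E := (hE_symm e.1 e.2).1 he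
    rw [hgg]
    exact (((hK_cont e.1 e.2).pow 2).div
        (((hpic e.1).mul (hw_cont e.1 e.2)).sub ((hpic e.2).mul (hw_cont e.2 e.1)))
        (fun t => hJ_ne e.1 e.2 he t)).mul
      ((((hpic e.1).mul (hw_cont e.1 e.2)).div ((hpic e.2).mul (hw_cont e.2 e.1))
          (fun t => (hq_pos e.2 e.1 hji t).ne')).log
        (fun t => (div_pos (hq_pos e.1 e.2 he t) (hq_pos e.2 e.1 hji t)).ne'))
  -- reduce to the real cost estimate
  rw [hI y]
  refine le_trans (sInf_le ⟨Qf, pi, hQf_cont, hQf_per, hQf_nonneg, hQf_zero, hpi_diff,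
    hpi_per, fun i t => (hpi_pos i t).le, hpi_sum, hQf_conteq, havg, rfl⟩) ?_
  have hint_f : ∀ e ∈ E, IntegrableOn (ff e) (Set.Ioc (0:ℝ) τ) :=
    fun e he => (hff_cont e he).integrableOn_Ioc
  have hf_nonneg : ∀ e ∈ E, ∀ t, 0 ≤ ff e t := by
    intro e he t
    rw [hff]
    exact phir_nonneg (hQf_nonneg _ _ t) (hq_pos e.1 e.2 he t)
  have hPhieq : ∀ e ∈ E, (∫⁻ t in Set.Ioc (0:ℝ) τ, Phi (Qf e.1 e.2 t) (pi e.1 t * w e.1 e.2 t))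
      = ENNReal.ofReal (∫ t in Set.Ioc (0:ℝ) τ, ff e t) := by
    intro e he
    rw [MeasureTheory.ofReal_integral_eq_lintegral_ofReal (hint_f e he)
      (Filter.Eventually.of_forall (hf_nonneg e he))]
    apply lintegral_congr
    intro t
    rw [hff]
    exact Phi_eq_ofReal_phir (hQf_nonneg _ _ t) (hq_pos e.1 e.2 he t)
  have cost_eq : (∑ e ∈ E, ENNReal.ofReal (1 / τ) *
      (∫⁻ t in Set.Ioc (0:ℝ) τ, Phi (Qf e.1 e.2 t) (pi e.1 t * w e.1 e.2 t)))
      = ENNReal.ofReal (∑ e ∈ E, (1/τ) * ∫ t in Set.Ioc (0:ℝ) τ, ff e t) := by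
    rw [ENNReal.ofReal_sum_of_nonneg]
    · apply Finset.sum_congr rfl
      intro e he
      rw [hPhieq e he, ENNReal.ofReal_mul (by positivity)]
    · intro e he
      have h0 : 0 ≤ ∫ t in Set.Ioc (0:ℝ) τ, ff e t :=
        setIntegral_nonneg measurableSet_Ioc (fun t _ => hf_nonneg e he t)
      positivity
  rw [cost_eq]
  apply ENNReal.ofReal_le_ofReal
  -- swap sum identity over the symmetric edge set
  have hswapE : ∀ h : V × V → ℝ, ∑ e ∈ E, h (e.2, e.1) = ∑ e ∈ E, h e := by
    intro h
    apply Finset.sum_nbij' (i := fun e : V × V => (e.2, e.1)) (j := fun e : V × V => (e.2, e.1))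
    · intro a ha; exact (hE_symm a.1 a.2).1 ha
    · intro a ha; exact (hE_symm a.1 a.2).1 ha
    · intro a ha; rfl
    · intro a ha; rfl
    · intro a ha; rfl
  -- the pointwise per-pair estimate
  have hpair : ∀ t : ℝ, ∀ e ∈ E, ff e t + ff (e.2, e.1) t ≤
      c^2/8 * gg e t + c^2/8 * gg (e.2, e.1) t := by
    intro t e he
    obtain ⟨i, j⟩ := e
    have hij : (i, j) ∈ E := he
    have hji : (j, i) ∈ E := (hE_symm i j).1 hij
    have hq : 0 < pi i t * w i j t := hq_pos i j hij t
    have hq' : 0 < pi j t * w j i t := hq_pos j i hji t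
    have hj0 : pi i t * w i j t - pi j t * w j i t ≠ 0 := hJ_ne i j hij t
    have hne : pi i t * w i j t ≠ pi j t * w j i t := sub_ne_zero.1 hj0
    have hkey := psi_core' (C := Cf i j t) hq hq' hne
    have hQii : Qf i j t = (Cf i j t +
        Real.sqrt ((Cf i j t)^2 + 4*(pi i t * w i j t * (pi j t * w j i t))))/2 := by
      simp only [hQf]
    have hQji : Qf j i t = (Real.sqrt ((Cf i j t)^2
        + 4*(pi i t * w i j t * (pi j t * w j i t))) - Cf i j t)/2 := by
      simp only [hQf]
      rw [hCf_anti i j t,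
        show (-Cf i j t)^2 + 4*(pi j t * w j i t * (pi i t * w i j t)) =
          (Cf i j t)^2 + 4*(pi i t * w i j t * (pi j t * w j i t)) from by ring]
      ring
    have hCK : Cf i j t - (pi i t * w i j t - pi j t * w j i t) = c * K i j t := by
      simp only [hCf]; ring
    simp only [hff, hgg]
    rw [hQii, hQji]
    have hlogswap : Real.log ((pi j t * w j i t) / (pi i t * w i j t))
        = - Real.log ((pi i t * w i j t)/(pi j t * w j i t)) := by
      rw [← Real.log_inv]; congr 1; field_simp
    rw [hlogswap, hK_anti j i t]
    refine le_trans hkey ?_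
    rw [show (Cf i j t - (pi i t * w i j t - pi j t * w j i t))^2 = (c * K i j t)^2 from by
      rw [hCK]]
    apply le_of_eq
    have hj0' : pi j t * w j i t - pi i t * w i j t ≠ 0 := fun h => hj0 (by linarith)
    field_simp
    ring
  -- integrate the pointwise estimate
  have hgg_int : ∀ e ∈ E, IntegrableOn (fun t => c^2/8 * gg e t) (Set.Ioc (0:ℝ) τ) :=
    fun e he => (continuous_const.mul (hgg_cont e he)).integrableOn_Ioc
  have hpt : ∀ t : ℝ, (∑ e ∈ E, ff e t) ≤ ∑ e ∈ E, c^2/8 * gg e t := by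
    intro t
    have h1 : ∑ e ∈ E, ff (e.2, e.1) t = ∑ e ∈ E, ff e t := hswapE (fun e => ff e t)
    have h2 : ∑ e ∈ E, c^2/8 * gg (e.2, e.1) t = ∑ e ∈ E, c^2/8 * gg e t :=
      hswapE (fun e => c^2/8 * gg e t)
    have h3 := Finset.sum_le_sum (fun e he => hpair t e he)
    rw [Finset.sum_add_distrib, Finset.sum_add_distrib, h1, h2] at h3
    linarith
  have hsum_f_int : IntegrableOn (fun t => ∑ e ∈ E, ff e t) (Set.Ioc (0:ℝ) τ) :=
    MeasureTheory.integrable_finset_sum E (fun e he => hint_f e he)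
  have hsum_g_int : IntegrableOn (fun t => ∑ e ∈ E, c^2/8 * gg e t) (Set.Ioc (0:ℝ) τ) :=
    MeasureTheory.integrable_finset_sum E (fun e he => hgg_int e he)
  calc ∑ e ∈ E, (1/τ) * ∫ t in Set.Ioc (0:ℝ) τ, ff e t
      = (1/τ) * ∑ e ∈ E, ∫ t in Set.Ioc (0:ℝ) τ, ff e t := by rw [Finset.mul_sum]
    _ = (1/τ) * ∫ t in Set.Ioc (0:ℝ) τ, (∑ e ∈ E, ff e t) := by
        rw [MeasureTheory.integral_finset_sum E hint_f]
    _ ≤ (1/τ) * ∫ t in Set.Ioc (0:ℝ) τ, (∑ e ∈ E, c^2/8 * gg e t) := by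
        apply mul_le_mul_of_nonneg_left _ (by positivity)
        exact setIntegral_mono_on hsum_f_int hsum_g_int measurableSet_Ioc (fun t _ => hpt t)
    _ = (1/τ) * (c^2/8 * ∑ e ∈ E, ∫ t in Set.Ioc (0:ℝ) τ, gg e t) := by
        congr 1
        rw [MeasureTheory.integral_finset_sum E hgg_int, Finset.mul_sum]
        exact Finset.sum_congr rfl fun e he => MeasureTheory.integral_const_mul _ _
    _ = (1/τ) * (c^2/8 * (2 * τ * σstar)) := by
        congr 2
        calc ∑ e ∈ E, ∫ t in Set.Ioc (0:ℝ) τ, gg e t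
            = ∑ e ∈ E, ∫ t in (0:ℝ)..τ, gg e t :=
              Finset.sum_congr rfl fun e he => (intervalIntegral.integral_of_le hτ.le).symm
          _ = 2 * τ * σstar := by
              rw [hσstar]
              simp only [hgg]
              rw [show ∑ e ∈ E, (1:ℝ) / τ * ∫ t in (0:ℝ)..τ,
                  ((K e.1 e.2 t) ^ 2 / (pi e.1 t * w e.1 e.2 t - pi e.2 t * w e.2 e.1 t)) *
                    Real.log ((pi e.1 t * w e.1 e.2 t) / (pi e.2 t * w e.2 e.1 t))
                = (1/τ) * ∑ e ∈ E, ∫ t in (0:ℝ)..τ,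
                  ((K e.1 e.2 t) ^ 2 / (pi e.1 t * w e.1 e.2 t - pi e.2 t * w e.2 e.1 t)) *
                    Real.log ((pi e.1 t * w e.1 e.2 t) / (pi e.2 t * w e.2 e.1 t))
                from (Finset.mul_sum _ _ _).symm]
              field_simp
    _ = (1/4) * (σstar / Kav^2) * (y - y0)^2 := by
        rw [← hcK]
        field_simp
        ring
end

section
/- Proposition (comparison of the universal constants C(p), C_a(p), C*_a(p)). Let p = (p_i)_{i∈V} be a probability vector on V (p_i ≥ 0, Σ_{i∈V} p_i = 1). Define C(p) := 2 Σ_{(i,j)∈E} p_i² · (1/τ)∫₀^τ w_{ij}(t)²/𝒬_{ij}(t) dt, C_a(p) := Σ_{(i,j)∈E} (1/τ)∫₀^τ (p_i w_{ij}(t) − p_j w_{ji}(t))² / (𝒬_{ij}(t) + 𝒬_{ji}(t)) dt, and, assuming 𝒥_{ij}(t) ≠ 0 for all (i,j) ∈ E and all t, C*_a(p) := (1/2) Σ_{(i,j)∈E} (1/τ)∫₀^τ [(p_i w_{ij}(t) − p_j w_{ji}(t))² / 𝒥_{ij}(t)] · log(𝒬_{ij}(t)/𝒬_{ji}(t)) dt.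 Then C(p) ≥ C_a(p), and (under the assumption 𝒥_{ij}(t) ≠ 0 for all (i,j) ∈ E and all t) C*_a(p) ≥ C_a(p). -/
private lemma logIneq_aux {t : ℝ} (ht : 1 ≤ t) : 2 * (t - 1) / (t + 1) ≤ Real.log t := by
  set f : ℝ → ℝ := fun u => Real.log u + 4 * (u + 1)⁻¹ with hf
  have hmono : MonotoneOn f (Set.Ici 1) := by
    apply monotoneOn_of_deriv_nonneg (convex_Ici 1)
    · apply ContinuousOn.add
      · exact fun x hx => (Real.continuousAt_log (by simp at hx; linarith)).continuousWithinAt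
      · apply ContinuousOn.mul continuousOn_const
        exact ContinuousOn.inv₀ (by fun_prop) (fun x hx => by simp at hx; positivity)
    · intro x hx
      rw [interior_Ici] at hx
      simp only [Set.mem_Ioi] at hx
      have h0 : (0:ℝ) < x := by linarith
      have hd : HasDerivAt f (x⁻¹ + 4 * (-1 / (x + 1) ^ 2)) x := by
        exact (Real.hasDerivAt_log h0.ne').add
          ((((hasDerivAt_id x).add_const 1).inv (by positivity)).const_mul 4)
      exact hd.differentiableAt.differentiableWithinAt
    · intro x hx
      rw [interior_Ici] at hx
      simp only [Set.mem_Ioi] at hx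
      have h0 : (0:ℝ) < x := by linarith
      have hd : HasDerivAt f (x⁻¹ + 4 * (-1 / (x + 1) ^ 2)) x := by
        exact (Real.hasDerivAt_log h0.ne').add
          ((((hasDerivAt_id x).add_const 1).inv (by positivity)).const_mul 4)
      rw [hd.deriv]
      have heq : x⁻¹ + 4 * (-1 / (x + 1) ^ 2) = (x - 1) ^ 2 / (x * (x + 1) ^ 2) := by
        field_simp
        ring
      rw [heq]
      positivity
  have h1 : f 1 ≤ f t := hmono (by simp) (by simpa using ht) ht
  have h1pos : (0:ℝ) < t + 1 := by linarith
  have heq : 2 * (t - 1) / (t + 1) = 2 - 4 * (t + 1)⁻¹ := by field_simp; ring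
  rw [heq]
  simp only [hf, Real.log_one] at h1
  norm_num at h1
  linarith

private lemma keyIneq_aux {x y : ℝ} (hy : 0 < y) (h : y < x) :
    2 / (x + y) ≤ Real.log (x / y) / (x - y) := by
  have hx : 0 < x := hy.trans h
  have ht : 1 ≤ x / y := (one_le_div hy).mpr h.le
  have hlog := logIneq_aux ht
  have heq : 2 * (x / y - 1) / (x / y + 1) = 2 * (x - y) / (x + y) := by
    rw [div_eq_div_iff (by positivity) (by positivity)]
    field_simp
  rw [heq] at hlog
  rw [div_le_div_iff₀ (by positivity) (by linarith)]
  have := (div_le_iff₀ (by positivity)).mp hlog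
  linarith

private lemma keyIneq {x y : ℝ} (hx : 0 < x) (hy : 0 < y) (hxy : x ≠ y) :
    2 / (x + y) ≤ Real.log (x / y) / (x - y) := by
  rcases hxy.lt_or_gt with h | h
  · have h2 := keyIneq_aux hx h
    have heq : Real.log (y / x) / (y - x) = Real.log (x / y) / (x - y) := by
      rw [Real.log_div hy.ne' hx.ne', Real.log_div hx.ne' hy.ne', ← neg_div_neg_eq]
      ring_nf
    rw [heq] at h2
    rwa [add_comm y x] at h2
  · exact keyIneq_aux hy h

private lemma engel_aux (a b c d : ℝ) (hc : 0 < c) (hd : 0 < d) :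
    (a - b) ^ 2 / (c + d) ≤ a ^ 2 / c + b ^ 2 / d := by
  rw [div_add_div _ _ hc.ne' hd.ne', div_le_div_iff₀ (by positivity) (by positivity)]
  nlinarith [sq_nonneg (a * d + b * c)]

private lemma pt2_aux (a b c d : ℝ) (hc : 0 < c) (hd : 0 < d) (hcd : c - d ≠ 0) :
    (a - b) ^ 2 / (c + d) ≤ (1 / 2) * ((a - b) ^ 2 / (c - d) * Real.log (c / d)) := by
  have hk := keyIneq hc hd (fun h => hcd (by rw [h]; ring))
  have h0 : (0:ℝ) ≤ (a - b) ^ 2 := sq_nonneg _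
  have hm := mul_le_mul_of_nonneg_left hk h0
  calc (a - b) ^ 2 / (c + d) = ((a - b) ^ 2 * (2 / (c + d))) / 2 := by ring
    _ ≤ ((a - b) ^ 2 * (Real.log (c / d) / (c - d))) / 2 := by linarith
    _ = (1 / 2) * ((a - b) ^ 2 / (c - d) * Real.log (c / d)) := by ring

theorem stmt11
    {V : Type} [Fintype V] [Nonempty V]
    (E : Finset (V × V)) (hE : ∀ i : V, (i, i) ∉ E)
    (hE_symm : ∀ i j : V, (i, j) ∈ E ↔ (j, i) ∈ E)
    (τ : ℝ) (hτ : 0 < τ)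
    (w : V → V → ℝ → ℝ)
    (hw_cont : ∀ i j, Continuous (w i j))
    (hw_per : ∀ i j, Function.Periodic (w i j) τ)
    (hw_pos : ∀ i j, (i, j) ∈ E → ∀ t, 0 < w i j t)
    (hw_zero : ∀ i j, (i, j) ∉ E → ∀ t, w i j t = 0)
    (pi : V → ℝ → ℝ)
    (hpi_cont : ∀ i, Continuous (pi i))
    (hpi_per : ∀ i, Function.Periodic (pi i) τ)
    (hpi_pos : ∀ i t, 0 < pi i t)
    (hpi_sum : ∀ t : ℝ, ∑ i, pi i t = 1)
    (p : V → ℝ) (hp_nonneg : ∀ i, 0 ≤ p i) (hp_sum : ∑ i, p i = 1)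
    (Cp Cap Castar : ℝ)
    (hCp : Cp = 2 * ∑ e ∈ E, (p e.1) ^ 2 * ((1 / τ) * (∫ t in (0:ℝ)..τ,
      (w e.1 e.2 t) ^ 2 / (pi e.1 t * w e.1 e.2 t))))
    (hCap : Cap = ∑ e ∈ E, (1 / τ) * (∫ t in (0:ℝ)..τ,
      (p e.1 * w e.1 e.2 t - p e.2 * w e.2 e.1 t) ^ 2
        / (pi e.1 t * w e.1 e.2 t + pi e.2 t * w e.2 e.1 t)))
    (hCastar : Castar = (1 / 2) * ∑ e ∈ E, (1 / τ) * (∫ t in (0:ℝ)..τ,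
      ((p e.1 * w e.1 e.2 t - p e.2 * w e.2 e.1 t) ^ 2
          / (pi e.1 t * w e.1 e.2 t - pi e.2 t * w e.2 e.1 t)) *
        Real.log ((pi e.1 t * w e.1 e.2 t) / (pi e.2 t * w e.2 e.1 t)))) :
    Cap ≤ Cp ∧
    ((∀ i j, (i, j) ∈ E → ∀ t : ℝ,
        pi i t * w i j t - pi j t * w j i t ≠ 0) → Cap ≤ Castar) := by
  have h0τ : (0:ℝ) ≤ τ := hτ.le
  have hτinv : (0:ℝ) ≤ 1 / τ := by positivity
  -- positivity of Q on edges
  have hQpos : ∀ i j, (i, j) ∈ E → ∀ t, 0 < pi i t * w i j t := by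
    intro i j hij t
    exact mul_pos (hpi_pos i t) (hw_pos i j hij t)
  have hQcont : ∀ i j : V, Continuous (fun t => pi i t * w i j t) := by
    intro i j
    exact (hpi_cont i).mul (hw_cont i j)
  have hnumcont : ∀ i j : V, Continuous (fun t => (p i * w i j t - p j * w j i t) ^ 2) := by
    intro i j
    exact ((continuous_const.mul (hw_cont i j)).sub (continuous_const.mul (hw_cont j i))).pow 2
  -- integrability of the Cap integrand on each edge
  have hcap_int : ∀ e ∈ E, IntervalIntegrable (fun t =>
      (p e.1 * w e.1 e.2 t - p e.2 * w e.2 e.1 t) ^ 2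
        / (pi e.1 t * w e.1 e.2 t + pi e.2 t * w e.2 e.1 t)) MeasureTheory.volume 0 τ := by
    intro e he
    have hij : (e.1, e.2) ∈ E := by rwa [Prod.mk.eta]
    have hji : (e.2, e.1) ∈ E := (hE_symm e.1 e.2).mp hij
    apply Continuous.intervalIntegrable
    apply Continuous.div (hnumcont e.1 e.2) ((hQcont e.1 e.2).add (hQcont e.2 e.1))
    intro t
    have := hQpos e.1 e.2 hij t
    have := hQpos e.2 e.1 hji t
    exact ne_of_gt (by simp only [Pi.add_apply]; linarith)
  constructor
  · -- Cap ≤ Cp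
    set G : V × V → ℝ := fun e => (1 / τ) * ∫ t in (0:ℝ)..τ,
      p e.1 ^ 2 * (w e.1 e.2 t ^ 2 / (pi e.1 t * w e.1 e.2 t)) with hG
    have hfint : ∀ e ∈ E, IntervalIntegrable (fun t =>
        p e.1 ^ 2 * (w e.1 e.2 t ^ 2 / (pi e.1 t * w e.1 e.2 t))) MeasureTheory.volume 0 τ := by
      intro e he
      have hij : (e.1, e.2) ∈ E := by rwa [Prod.mk.eta]
      apply Continuous.intervalIntegrable
      apply Continuous.mul continuous_const
      exact Continuous.div ((hw_cont e.1 e.2).pow 2) (hQcont e.1 e.2)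
        (fun t => (hQpos e.1 e.2 hij t).ne')
    have hstep : ∀ e ∈ E, (1 / τ) * (∫ t in (0:ℝ)..τ,
        (p e.1 * w e.1 e.2 t - p e.2 * w e.2 e.1 t) ^ 2
          / (pi e.1 t * w e.1 e.2 t + pi e.2 t * w e.2 e.1 t)) ≤ G e + G e.swap := by
      intro e he
      have hij : (e.1, e.2) ∈ E := by rwa [Prod.mk.eta]
      have hji : (e.2, e.1) ∈ E := (hE_symm e.1 e.2).mp hij
      have hint1 := hfint e he
      have hint2 : IntervalIntegrable (fun t =>
          p e.2 ^ 2 * (w e.2 e.1 t ^ 2 / (pi e.2 t * w e.2 e.1 t))) MeasureTheory.volume 0 τ := by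
        have := hfint e.swap (by exact hji)
        simpa using this
      have hmain : (∫ t in (0:ℝ)..τ,
          (p e.1 * w e.1 e.2 t - p e.2 * w e.2 e.1 t) ^ 2
            / (pi e.1 t * w e.1 e.2 t + pi e.2 t * w e.2 e.1 t)) ≤
          (∫ t in (0:ℝ)..τ, p e.1 ^ 2 * (w e.1 e.2 t ^ 2 / (pi e.1 t * w e.1 e.2 t)))
          + (∫ t in (0:ℝ)..τ, p e.2 ^ 2 * (w e.2 e.1 t ^ 2 / (pi e.2 t * w e.2 e.1 t))) := by
        rw [← intervalIntegral.integral_add hint1 hint2]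
        apply intervalIntegral.integral_mono_on h0τ (hcap_int e he) (hint1.add hint2)
        intro t ht
        have hc := hQpos e.1 e.2 hij t
        have hd := hQpos e.2 e.1 hji t
        have := engel_aux (p e.1 * w e.1 e.2 t) (p e.2 * w e.2 e.1 t)
          (pi e.1 t * w e.1 e.2 t) (pi e.2 t * w e.2 e.1 t) hc hd
        calc (p e.1 * w e.1 e.2 t - p e.2 * w e.2 e.1 t) ^ 2
              / (pi e.1 t * w e.1 e.2 t + pi e.2 t * w e.2 e.1 t)
            ≤ (p e.1 * w e.1 e.2 t) ^ 2 / (pi e.1 t * w e.1 e.2 t)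
              + (p e.2 * w e.2 e.1 t) ^ 2 / (pi e.2 t * w e.2 e.1 t) := this
          _ = p e.1 ^ 2 * (w e.1 e.2 t ^ 2 / (pi e.1 t * w e.1 e.2 t))
              + p e.2 ^ 2 * (w e.2 e.1 t ^ 2 / (pi e.2 t * w e.2 e.1 t)) := by
              rw [mul_pow, mul_pow, mul_div_assoc, mul_div_assoc]
      have := mul_le_mul_of_nonneg_left hmain hτinv
      calc (1 / τ) * (∫ t in (0:ℝ)..τ,
            (p e.1 * w e.1 e.2 t - p e.2 * w e.2 e.1 t) ^ 2
              / (pi e.1 t * w e.1 e.2 t + pi e.2 t * w e.2 e.1 t))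
          ≤ (1 / τ) * ((∫ t in (0:ℝ)..τ, p e.1 ^ 2 * (w e.1 e.2 t ^ 2 / (pi e.1 t * w e.1 e.2 t)))
            + (∫ t in (0:ℝ)..τ, p e.2 ^ 2 * (w e.2 e.1 t ^ 2 / (pi e.2 t * w e.2 e.1 t)))) := this
        _ = G e + G e.swap := by simp [hG]; ring
    have hswap : ∑ e ∈ E, G e.swap = ∑ e ∈ E, G e := by
      apply Finset.sum_equiv (Equiv.prodComm V V)
      · intro e
        constructor
        · intro he
          have : (e.1, e.2) ∈ E := by rwa [Prod.mk.eta]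
          exact (hE_symm e.1 e.2).mp this
        · intro he
          have : (e.2, e.1) ∈ E := he
          have := (hE_symm e.2 e.1).mp this
          rwa [Prod.mk.eta] at this
      · intro e _
        rfl
    have hCp' : Cp = ∑ e ∈ E, (G e + G e.swap) := by
      rw [Finset.sum_add_distrib, hswap, hCp, ← two_mul]
      congr 1
      apply Finset.sum_congr rfl
      intro e he
      simp only [hG]
      rw [intervalIntegral.integral_const_mul]
      ring
    rw [hCap, hCp']
    exact Finset.sum_le_sum hstep
  · -- Cap ≤ Castar
    intro hJ
    have hstar_int : ∀ e ∈ E, IntervalIntegrable (fun t =>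
        ((p e.1 * w e.1 e.2 t - p e.2 * w e.2 e.1 t) ^ 2
            / (pi e.1 t * w e.1 e.2 t - pi e.2 t * w e.2 e.1 t)) *
          Real.log ((pi e.1 t * w e.1 e.2 t) / (pi e.2 t * w e.2 e.1 t)))
        MeasureTheory.volume 0 τ := by
      intro e he
      have hij : (e.1, e.2) ∈ E := by rwa [Prod.mk.eta]
      have hji : (e.2, e.1) ∈ E := (hE_symm e.1 e.2).mp hij
      apply Continuous.intervalIntegrable
      apply Continuous.mul
      · exact Continuous.div (hnumcont e.1 e.2) ((hQcont e.1 e.2).sub (hQcont e.2 e.1))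
          (fun t => hJ e.1 e.2 hij t)
      · apply Continuous.log
        · exact Continuous.div (hQcont e.1 e.2) (hQcont e.2 e.1)
            (fun t => (hQpos e.2 e.1 hji t).ne')
        · intro t
          have h1 := hQpos e.1 e.2 hij t
          have h2 := hQpos e.2 e.1 hji t
          positivity
    rw [hCap, hCastar, Finset.mul_sum]
    apply Finset.sum_le_sum
    intro e he
    have hij : (e.1, e.2) ∈ E := by rwa [Prod.mk.eta]
    have hji : (e.2, e.1) ∈ E := (hE_symm e.1 e.2).mp hij
    have hmain : (∫ t in (0:ℝ)..τ,
        (p e.1 * w e.1 e.2 t - p e.2 * w e.2 e.1 t) ^ 2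
          / (pi e.1 t * w e.1 e.2 t + pi e.2 t * w e.2 e.1 t)) ≤
        ∫ t in (0:ℝ)..τ, (1 / 2) * (((p e.1 * w e.1 e.2 t - p e.2 * w e.2 e.1 t) ^ 2
            / (pi e.1 t * w e.1 e.2 t - pi e.2 t * w e.2 e.1 t)) *
          Real.log ((pi e.1 t * w e.1 e.2 t) / (pi e.2 t * w e.2 e.1 t))) := by
      apply intervalIntegral.integral_mono_on h0τ (hcap_int e he)
        ((hstar_int e he).const_mul (1 / 2))
      intro t ht
      exact pt2_aux (p e.1 * w e.1 e.2 t) (p e.2 * w e.2 e.1 t)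
        (pi e.1 t * w e.1 e.2 t) (pi e.2 t * w e.2 e.1 t)
        (hQpos e.1 e.2 hij t) (hQpos e.2 e.1 hji t) (hJ e.1 e.2 hij t)
    rw [intervalIntegral.integral_const_mul] at hmain
    have := mul_le_mul_of_nonneg_left hmain hτinv
    calc (1 / τ) * (∫ t in (0:ℝ)..τ,
          (p e.1 * w e.1 e.2 t - p e.2 * w e.2 e.1 t) ^ 2
            / (pi e.1 t * w e.1 e.2 t + pi e.2 t * w e.2 e.1 t))
        ≤ (1 / τ) * ((1 / 2) * ∫ t in (0:ℝ)..τ,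
          ((p e.1 * w e.1 e.2 t - p e.2 * w e.2 e.1 t) ^ 2
              / (pi e.1 t * w e.1 e.2 t - pi e.2 t * w e.2 e.1 t)) *
            Real.log ((pi e.1 t * w e.1 e.2 t) / (pi e.2 t * w e.2 e.1 t))) := this
      _ = (1 / 2) * ((1 / τ) * ∫ t in (0:ℝ)..τ,
          ((p e.1 * w e.1 e.2 t - p e.2 * w e.2 e.1 t) ^ 2
              / (pi e.1 t * w e.1 e.2 t - pi e.2 t * w e.2 e.1 t)) *
            Real.log ((pi e.1 t * w e.1 e.2 t) / (pi e.2 t * w e.2 e.1 t))) := by ring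
end

section
/- Proposition (comparison of the universal constants σ̂, σ̃, σ*). Define σ̂ := 2 Σ_{(i,j)∈E} ((1/τ)∫₀^τ 𝒬_{ij}(t) dt)² · (1/τ)∫₀^τ 1/𝒬_{ij}(t) dt, σ̃ := Σ_{(i,j)∈E} ((1/τ)∫₀^τ 𝒥_{ij}(t) dt)² · (1/τ)∫₀^τ 1/(𝒬_{ij}(t) + 𝒬_{ji}(t)) dt, and, assuming 𝒥_{ij}(t) ≠ 0 for all (i,j) ∈ E and all t, σ* := (1/2) Σ_{(i,j)∈E} ((1/τ)∫₀^τ 𝒥_{ij}(t) dt)² · (1/τ)∫₀^τ (1/𝒥_{ij}(t)) · log(𝒬_{ij}(t)/𝒬_{ji}(t)) dt. Then σ̂ ≥ σ̃, and (under the assumption 𝒥_{ij}(t) ≠ 0 for all (i,j) ∈ E and all t) σ* ≥ σ̃. -/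
open intervalIntegral Real

theorem logB {x : ℝ} (hx : 1 ≤ x) : 2*(x-1)/(x+1) ≤ Real.log x := by
  have h1 : Real.log x = ∫ t in (1:ℝ)..x, t⁻¹ := by
    rw [integral_inv (by rw [Set.uIcc_of_le hx]; intro h; linarith [h.1])]
    simp
  have h2 : (2*(x-1)/(x+1)) = ∫ t in (1:ℝ)..x, 4*((t+1)^(-2:ℤ)) := by
    rw [intervalIntegral.integral_const_mul]
    rw [intervalIntegral.integral_comp_add_right (fun t => t^(-2:ℤ)) 1]
    rw [integral_zpow (Or.inr ⟨by norm_num, by rw [Set.uIcc_of_le (by linarith)]; intro h; linarith [h.1]⟩)]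
    norm_num
    field_simp
    ring
  rw [h1, h2]
  apply intervalIntegral.integral_mono_on hx
  · apply IntervalIntegrable.const_mul
    apply ContinuousOn.intervalIntegrable
    apply ContinuousOn.zpow₀ (by fun_prop)
    intro t ht; left; rw [Set.uIcc_of_le hx] at ht; intro h; linarith [ht.1]
  · apply ContinuousOn.intervalIntegrable
    apply ContinuousOn.inv₀ (by fun_prop)
    intro t ht; rw [Set.uIcc_of_le hx] at ht; intro h; linarith [ht.1]
  · intro t ht
    have h1t : 1 ≤ t := ht.1
    have hpos : (0:ℝ) < t := by linarith
    have hz : ((t+1):ℝ)^(-2:ℤ) = ((t+1)^2)⁻¹ := by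
      rw [zpow_neg, zpow_two, sq]
    rw [hz, ← one_div, ← one_div, mul_one_div, div_le_div_iff₀ (by positivity) hpos]
    nlinarith [sq_nonneg (t-1)]

theorem logA' {a b : ℝ} (ha : 0 < a) (hb : 0 < b) (h : b < a) :
    1/(a+b) ≤ (1/2) * ((1/(a-b)) * Real.log (a/b)) := by
  have hab : 0 < a - b := by linarith
  have key : 2*(a-b)/(a+b) ≤ Real.log (a/b) := by
    have h1 : 1 ≤ a/b := (one_le_div hb).2 h.le
    have h2 := logB h1
    have h3 : 2*(a/b-1)/(a/b+1) = 2*(a-b)/(a+b) := by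
      rw [div_eq_div_iff (by positivity) (by positivity)]
      field_simp
    linarith [h3 ▸ h2]
  have key' : 2*(a-b) ≤ Real.log (a/b) * (a+b) := by
    rw [div_le_iff₀ (by positivity : (0:ℝ) < a+b)] at key
    linarith
  have heq : (1/2) * ((1/(a-b)) * Real.log (a/b)) = Real.log (a/b) / (2*(a-b)) := by
    field_simp
  rw [heq, div_le_div_iff₀ (by positivity) (by positivity)]
  linarith

theorem logA {a b : ℝ} (ha : 0 < a) (hb : 0 < b) (hne : a ≠ b) :
    1/(a+b) ≤ (1/2) * ((1/(a-b)) * Real.log (a/b)) := by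
  rcases lt_or_gt_of_ne hne with h | h
  · have h1 : Real.log (a/b) = -Real.log (b/a) := by
      rw [← Real.log_inv, inv_div]
    have h2 : (1:ℝ)/(a-b) = -(1/(b-a)) := by
      rw [show a-b = -(b-a) by ring, one_div, one_div, inv_neg]
    rw [h1, h2, neg_mul_neg, show a+b = b+a by ring]
    exact logA' hb ha h
  · exact logA' ha hb h

theorem edge_hat {τ : ℝ} (hτ : 0 < τ) {Q R : ℝ → ℝ} (hQ : Continuous Q) (hR : Continuous R)
    (hQp : ∀ t, 0 < Q t) (hRp : ∀ t, 0 < R t) :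
    ((1/τ) * ∫ t in (0:ℝ)..τ, (Q t - R t))^2 * ((1/τ) * ∫ t in (0:ℝ)..τ, 1/(Q t + R t))
    ≤ ((1/τ) * ∫ t in (0:ℝ)..τ, Q t)^2 * ((1/τ) * ∫ t in (0:ℝ)..τ, 1/(Q t))
      + ((1/τ) * ∫ t in (0:ℝ)..τ, R t)^2 * ((1/τ) * ∫ t in (0:ℝ)..τ, 1/(R t)) := by
  have hQi : IntervalIntegrable Q MeasureTheory.volume 0 τ := hQ.intervalIntegrable _ _
  have hRi : IntervalIntegrable R MeasureTheory.volume 0 τ := hR.intervalIntegrable _ _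
  have hiQ : Continuous fun t => 1/(Q t) :=
    continuous_const.div hQ fun t => (hQp t).ne'
  have hiR : Continuous fun t => 1/(R t) :=
    continuous_const.div hR fun t => (hRp t).ne'
  have hiQR : Continuous fun t => 1/(Q t + R t) :=
    continuous_const.div (hQ.add hR) fun t => (add_pos (hQp t) (hRp t)).ne'
  set A := (1/τ) * ∫ t in (0:ℝ)..τ, Q t with hA
  set B := (1/τ) * ∫ t in (0:ℝ)..τ, R t with hB
  set C := (1/τ) * ∫ t in (0:ℝ)..τ, 1/(Q t + R t) with hC
  set X := (1/τ) * ∫ t in (0:ℝ)..τ, 1/(Q t) with hX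
  set Y := (1/τ) * ∫ t in (0:ℝ)..τ, 1/(R t) with hY
  have hsub : ((1/τ) * ∫ t in (0:ℝ)..τ, (Q t - R t)) = A - B := by
    rw [intervalIntegral.integral_sub hQi hRi, hA, hB]; ring
  rw [hsub]
  have hτ' : (0:ℝ) ≤ 1/τ := by positivity
  have hAn : 0 ≤ A := mul_nonneg hτ'
    (intervalIntegral.integral_nonneg hτ.le fun t _ => (hQp t).le)
  have hBn : 0 ≤ B := mul_nonneg hτ'
    (intervalIntegral.integral_nonneg hτ.le fun t _ => (hRp t).le)
  have hCn : 0 ≤ C := mul_nonneg hτ'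
    (intervalIntegral.integral_nonneg hτ.le fun t _ => le_of_lt (one_div_pos.2 (add_pos (hQp t) (hRp t))))
  have hCX : C ≤ X := by
    apply mul_le_mul_of_nonneg_left _ hτ'
    apply intervalIntegral.integral_mono_on hτ.le
      (hiQR.intervalIntegrable _ _) (hiQ.intervalIntegrable _ _)
    intro t _
    exact one_div_le_one_div_of_le (hQp t) (by linarith [hRp t])
  have hCY : C ≤ Y := by
    apply mul_le_mul_of_nonneg_left _ hτ'
    apply intervalIntegral.integral_mono_on hτ.le
      (hiQR.intervalIntegrable _ _) (hiR.intervalIntegrable _ _)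
    intro t _
    exact one_div_le_one_div_of_le (hRp t) (by linarith [hQp t])
  nlinarith [mul_nonneg (sq_nonneg A) (sub_nonneg.2 hCX),
    mul_nonneg (sq_nonneg B) (sub_nonneg.2 hCY),
    mul_nonneg (mul_nonneg hAn hBn) hCn]

theorem edge_star {τ : ℝ} (hτ : 0 < τ) {Q R : ℝ → ℝ} (hQ : Continuous Q) (hR : Continuous R)
    (hQp : ∀ t, 0 < Q t) (hRp : ∀ t, 0 < R t) (hne : ∀ t, Q t - R t ≠ 0) :
    ((1/τ) * ∫ t in (0:ℝ)..τ, 1/(Q t + R t))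
    ≤ (1/2) * ((1/τ) * ∫ t in (0:ℝ)..τ, (1/(Q t - R t)) * Real.log (Q t / R t)) := by
  have hiQR : Continuous fun t => 1/(Q t + R t) :=
    continuous_const.div (hQ.add hR) fun t => (add_pos (hQp t) (hRp t)).ne'
  have hstar : Continuous fun t => (1/(Q t - R t)) * Real.log (Q t / R t) := by
    apply Continuous.mul
    · exact continuous_const.div (hQ.sub hR) hne
    · exact (hQ.div hR fun t => (hRp t).ne').log
        fun t => (div_pos (hQp t) (hRp t)).ne'
  have key : (∫ t in (0:ℝ)..τ, 1/(Q t + R t))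
      ≤ ∫ t in (0:ℝ)..τ, (1/2) * ((1/(Q t - R t)) * Real.log (Q t / R t)) := by
    apply intervalIntegral.integral_mono_on hτ.le
      (hiQR.intervalIntegrable _ _) ((continuous_const.mul hstar).intervalIntegrable _ _)
    intro t _
    exact logA (hQp t) (hRp t) (sub_ne_zero.1 (hne t))
  rw [intervalIntegral.integral_const_mul] at key
  have hτ' : (0:ℝ) ≤ 1/τ := by positivity
  calc (1/τ) * ∫ t in (0:ℝ)..τ, 1/(Q t + R t)
      ≤ (1/τ) * ((1/2) * ∫ t in (0:ℝ)..τ, (1/(Q t - R t)) * Real.log (Q t / R t)) :=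
        mul_le_mul_of_nonneg_left key hτ'
    _ = (1/2) * ((1/τ) * ∫ t in (0:ℝ)..τ, (1/(Q t - R t)) * Real.log (Q t / R t)) := by ring

theorem stmt12
    {V : Type} [Fintype V] [Nonempty V]
    (E : Finset (V × V)) (hE : ∀ i : V, (i, i) ∉ E)
    (hE_symm : ∀ i j : V, (i, j) ∈ E ↔ (j, i) ∈ E)
    (τ : ℝ) (hτ : 0 < τ)
    (w : V → V → ℝ → ℝ)
    (hw_cont : ∀ i j, Continuous (w i j))
    (hw_per : ∀ i j, Function.Periodic (w i j) τ)
    (hw_pos : ∀ i j, (i, j) ∈ E → ∀ t, 0 < w i j t)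
    (hw_zero : ∀ i j, (i, j) ∉ E → ∀ t, w i j t = 0)
    (pi : V → ℝ → ℝ)
    (hpi_cont : ∀ i, Continuous (pi i))
    (hpi_per : ∀ i, Function.Periodic (pi i) τ)
    (hpi_pos : ∀ i t, 0 < pi i t)
    (hpi_sum : ∀ t : ℝ, ∑ i, pi i t = 1)
    (σhat σtilde σstar : ℝ)
    (hσhat : σhat = 2 * ∑ e ∈ E,
      ((1 / τ) * (∫ t in (0:ℝ)..τ, pi e.1 t * w e.1 e.2 t)) ^ 2 *
        ((1 / τ) * (∫ t in (0:ℝ)..τ, 1 / (pi e.1 t * w e.1 e.2 t))))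
    (hσtilde : σtilde = ∑ e ∈ E,
      ((1 / τ) * (∫ t in (0:ℝ)..τ,
          pi e.1 t * w e.1 e.2 t - pi e.2 t * w e.2 e.1 t)) ^ 2 *
        ((1 / τ) * (∫ t in (0:ℝ)..τ,
          1 / (pi e.1 t * w e.1 e.2 t + pi e.2 t * w e.2 e.1 t))))
    (hσstar : σstar = (1 / 2) * ∑ e ∈ E,
      ((1 / τ) * (∫ t in (0:ℝ)..τ,
          pi e.1 t * w e.1 e.2 t - pi e.2 t * w e.2 e.1 t)) ^ 2 *
        ((1 / τ) * (∫ t in (0:ℝ)..τ,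
          (1 / (pi e.1 t * w e.1 e.2 t - pi e.2 t * w e.2 e.1 t)) *
            Real.log ((pi e.1 t * w e.1 e.2 t) / (pi e.2 t * w e.2 e.1 t))))) :
    σtilde ≤ σhat ∧
    ((∀ i j, (i, j) ∈ E → ∀ t : ℝ,
        pi i t * w i j t - pi j t * w j i t ≠ 0) → σtilde ≤ σstar) := by
  constructor
  · rw [hσtilde, hσhat]
    have hswap : (∑ e ∈ E, ((1 / τ) * (∫ t in (0:ℝ)..τ, pi e.1 t * w e.1 e.2 t)) ^ 2 *
          ((1 / τ) * (∫ t in (0:ℝ)..τ, 1 / (pi e.1 t * w e.1 e.2 t))))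
        = ∑ e ∈ E, ((1 / τ) * (∫ t in (0:ℝ)..τ, pi e.2 t * w e.2 e.1 t)) ^ 2 *
          ((1 / τ) * (∫ t in (0:ℝ)..τ, 1 / (pi e.2 t * w e.2 e.1 t))) := by
      refine Finset.sum_nbij' (fun e => (e.2, e.1)) (fun e => (e.2, e.1)) ?_ ?_ ?_ ?_ ?_
      · intro a ha; exact (hE_symm a.1 a.2).1 ha
      · intro a ha; exact (hE_symm a.1 a.2).1 ha
      · intro a _; rfl
      · intro a _; rfl
      · intro a _; rfl
    rw [two_mul]
    nth_rewrite 2 [hswap]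
    rw [← Finset.sum_add_distrib]
    apply Finset.sum_le_sum
    intro e he
    have heE : (e.1, e.2) ∈ E := he
    have heE' : (e.2, e.1) ∈ E := (hE_symm e.1 e.2).1 heE
    exact edge_hat hτ ((hpi_cont e.1).mul (hw_cont e.1 e.2))
      ((hpi_cont e.2).mul (hw_cont e.2 e.1))
      (fun t => mul_pos (hpi_pos e.1 t) (hw_pos e.1 e.2 heE t))
      (fun t => mul_pos (hpi_pos e.2 t) (hw_pos e.2 e.1 heE' t))
  · intro hJ
    rw [hσtilde, hσstar, Finset.mul_sum]
    apply Finset.sum_le_sum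
    intro e he
    have heE : (e.1, e.2) ∈ E := he
    have heE' : (e.2, e.1) ∈ E := (hE_symm e.1 e.2).1 heE
    have h := edge_star hτ ((hpi_cont e.1).mul (hw_cont e.1 e.2))
      ((hpi_cont e.2).mul (hw_cont e.2 e.1))
      (fun t => mul_pos (hpi_pos e.1 t) (hw_pos e.1 e.2 heE t))
      (fun t => mul_pos (hpi_pos e.2 t) (hw_pos e.2 e.1 heE' t))
      (fun t => hJ e.1 e.2 heE t)
    refine le_trans (mul_le_mul_of_nonneg_left h (sq_nonneg _)) (le_of_eq (by simp only [Pi.mul_apply]; ring))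
end

section
/- Inequality for time-independent stationary distributions (Remark on comparing GTUR 1 with the optimal GTUR 2). Let V be a finite nonempty set and E ⊆ V × V a set of oriented edges with (i,i) ∉ E for all i; assume every i ∈ V has at least one outgoing edge, i.e. for every i there exists j with (i,j) ∈ E. Fix a period τ > 0. For each (i,j) ∈ V × V let w_{ij} : ℝ → ℝ be a continuous τ-periodic function with w_{ij}(t) > 0 for all t if (i,j) ∈ E and w_{ij}(t) = 0 for all t if (i,j) ∉ E. Let (π_i)_{i∈V} be a time-independent probability vector with π_i > 0 for all i, and set 𝒬_{ij}(t) := π_i w_{ij}(t). Writing f̄ := (1/τ)∫₀^τ f(t) dt, it holds: Σ_{i∈V} π_i · (Σ_{j:(i,j)∈E} w̄_{ij})^{-1} ≥ ( Σ_{(i,j)∈E} (𝒬̄_{ij})² · (1/τ)∫₀^τ 1/𝒬_{ij}(t) dt )^{-1}. -/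
theorem stmt13
    {V : Type} [Fintype V] [Nonempty V] [DecidableEq V]
    (E : Finset (V × V)) (hE : ∀ i : V, (i, i) ∉ E)
    (hE_out : ∀ i : V, ∃ j : V, (i, j) ∈ E)
    (τ : ℝ) (hτ : 0 < τ)
    (w : V → V → ℝ → ℝ)
    (hw_cont : ∀ i j, Continuous (w i j))
    (hw_per : ∀ i j, Function.Periodic (w i j) τ)
    (hw_pos : ∀ i j, (i, j) ∈ E → ∀ t, 0 < w i j t)
    (hw_zero : ∀ i j, (i, j) ∉ E → ∀ t, w i j t = 0)
    (pi : V → ℝ) (hpi_pos : ∀ i, 0 < pi i) (hpi_sum : ∑ i, pi i = 1) :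
    (∑ e ∈ E, ((1 / τ) * (∫ t in (0:ℝ)..τ, pi e.1 * w e.1 e.2 t)) ^ 2 *
        ((1 / τ) * (∫ t in (0:ℝ)..τ, 1 / (pi e.1 * w e.1 e.2 t))))⁻¹
      ≤ ∑ i, pi i *
          (∑ j ∈ Finset.univ.filter (fun j => (i, j) ∈ E),
            (1 / τ) * (∫ t in (0:ℝ)..τ, w i j t))⁻¹ := by
  -- Notation for averages
  set S : V → ℝ := fun i => ∑ j ∈ Finset.univ.filter (fun j => (i, j) ∈ E),
      (1 / τ) * (∫ t in (0:ℝ)..τ, w i j t) with hS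
  -- integrals of w over edges are positive
  have hIpos : ∀ e ∈ E, 0 < ∫ t in (0:ℝ)..τ, w e.1 e.2 t := by
    intro e he
    exact intervalIntegral.intervalIntegral_pos_of_pos ((hw_cont e.1 e.2).intervalIntegrable 0 τ)
      (hw_pos e.1 e.2 he) hτ
  -- key per-edge inequality
  have hedge : ∀ e ∈ E,
      (1 / τ) * (pi e.1 * (∫ t in (0:ℝ)..τ, w e.1 e.2 t)) ≤
      ((1 / τ) * (∫ t in (0:ℝ)..τ, pi e.1 * w e.1 e.2 t)) ^ 2 *
        ((1 / τ) * (∫ t in (0:ℝ)..τ, 1 / (pi e.1 * w e.1 e.2 t))) := by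
    intro e he
    set Q : ℝ → ℝ := fun t => pi e.1 * w e.1 e.2 t with hQ
    have hQc : Continuous Q := continuous_const.mul (hw_cont e.1 e.2)
    have hQpos : ∀ t, 0 < Q t := fun t => mul_pos (hpi_pos e.1) (hw_pos e.1 e.2 he t)
    have hQinvc : Continuous fun t => 1 / Q t := by
      simp only [one_div]
      exact hQc.inv₀ fun t => (hQpos t).ne'
    set A : ℝ := ∫ t in (0:ℝ)..τ, Q t with hA
    set B : ℝ := ∫ t in (0:ℝ)..τ, 1 / Q t with hB
    have hApos : 0 < A :=
      intervalIntegral.intervalIntegral_pos_of_pos (hQc.intervalIntegrable 0 τ) hQpos hτ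
    have hBpos : 0 < B :=
      intervalIntegral.intervalIntegral_pos_of_pos (hQinvc.intervalIntegrable 0 τ)
        (fun t => one_div_pos.mpr (hQpos t)) hτ
    -- Cauchy-Schwarz: τ^2 ≤ A * B
    have hAB : τ ^ 2 ≤ A * B := by
      set s : ℝ := Real.sqrt (B / A) with hs
      have hspos : 0 < s := Real.sqrt_pos.mpr (by positivity)
      have hs2 : s ^ 2 = B / A := Real.sq_sqrt (by positivity)
      have hkey : 2 * τ ≤ s * A + (1 / s) * B := by
        have e1 : (∫ t in (0:ℝ)..τ, s * Q t) = s * A := by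
          rw [hA]; exact intervalIntegral.integral_const_mul _ _
        have e2 : (∫ t in (0:ℝ)..τ, (1 / s) * (1 / Q t)) = (1 / s) * B := by
          rw [hB]; exact intervalIntegral.integral_const_mul _ _
        have hint : ∫ t in (0:ℝ)..τ, (s * Q t + (1 / s) * (1 / Q t))
            = s * A + (1 / s) * B := by
          rw [intervalIntegral.integral_add
              (((hQc.intervalIntegrable 0 τ).const_mul s))
              (((hQinvc.intervalIntegrable 0 τ).const_mul (1 / s))), e1, e2]
        have hmono : ∫ t in (0:ℝ)..τ, (2:ℝ) ≤
            ∫ t in (0:ℝ)..τ, (s * Q t + (1 / s) * (1 / Q t)) := by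
          apply intervalIntegral.integral_mono_on hτ.le (intervalIntegrable_const)
          · exact ((hQc.intervalIntegrable 0 τ).const_mul s).add
              ((hQinvc.intervalIntegrable 0 τ).const_mul (1 / s))
          · intro t _
            have hQt := hQpos t
            have h1 : 0 < s * Q t := mul_pos hspos hQt
            have : (s * Q t - 1) ^ 2 / (s * Q t) ≥ 0 := by positivity
            have hexp : (s * Q t - 1) ^ 2 / (s * Q t)
                = s * Q t + (1 / s) * (1 / Q t) - 2 := by
              field_simp
              ring
            linarith [hexp ▸ this]
        rw [hint, intervalIntegral.integral_const, smul_eq_mul] at hmono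
        linarith
      -- B = s^2 * A, so s*A + B/s = 2*s*A, hence τ ≤ s*A
      have hBe : B = s ^ 2 * A := by
        rw [hs2]; field_simp
      have hts : τ ≤ s * A := by
        have : (1 / s) * B = s * A := by
          rw [hBe]; field_simp
        linarith
      calc τ ^ 2 ≤ (s * A) ^ 2 := by nlinarith
        _ = A * B := by rw [hBe]; ring
    -- conclude per-edge inequality
    have hgoal : ((1 / τ) * A) ^ 2 * ((1 / τ) * B) = A ^ 2 * B / τ ^ 3 := by ring
    have hlhs : (1 / τ) * (pi e.1 * (∫ t in (0:ℝ)..τ, w e.1 e.2 t)) = A / τ := by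
      rw [hA, hQ, intervalIntegral.integral_const_mul]
      ring
    rw [hlhs]
    show A / τ ≤ ((1 / τ) * A) ^ 2 * ((1 / τ) * B)
    rw [hgoal, div_le_div_iff₀ hτ (by positivity)]
    nlinarith [mul_le_mul_of_nonneg_left hAB (mul_nonneg hApos.le hτ.le)]
  -- Sum over edges: T := ∑_i pi i * S i ≤ LHS denominator
  have hsum : ∑ e ∈ E, (1 / τ) * (pi e.1 * (∫ t in (0:ℝ)..τ, w e.1 e.2 t))
      = ∑ i, pi i * S i := by
    have h1 : E = Finset.univ.filter (fun e : V × V => e ∈ E) := by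
      ext e; simp
    rw [h1, Finset.sum_filter, Fintype.sum_prod_type]
    simp only [hS, Finset.mul_sum, Finset.sum_filter]
    congr 1; ext i; congr 1; ext j
    by_cases hij : (i, j) ∈ E <;> simp [hij] <;> ring
  have hSpos : ∀ i, 0 < S i := by
    intro i
    obtain ⟨j, hj⟩ := hE_out i
    refine Finset.sum_pos' (fun k hk => ?_) ⟨j, by simpa using hj, ?_⟩
    · rcases Finset.mem_filter.mp hk with ⟨-, hk⟩
      have := hIpos (i, k) hk
      positivity
    · have := hIpos (i, j) hj
      positivity
  set T : ℝ := ∑ i, pi i * S i with hT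
  have hTpos : 0 < T :=
    Finset.sum_pos (fun i _ => mul_pos (hpi_pos i) (hSpos i)) Finset.univ_nonempty
  have hTle : T ≤ ∑ e ∈ E, ((1 / τ) * (∫ t in (0:ℝ)..τ, pi e.1 * w e.1 e.2 t)) ^ 2 *
      ((1 / τ) * (∫ t in (0:ℝ)..τ, 1 / (pi e.1 * w e.1 e.2 t))) := by
    rw [← hsum]
    exact Finset.sum_le_sum hedge
  -- Cauchy-Schwarz on the finite sum: 1 ≤ T * ∑ pi i * (S i)⁻¹
  have hCS : (1:ℝ) ≤ T * ∑ i, pi i * (S i)⁻¹ := by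
    have := Finset.sum_sq_le_sum_mul_sum_of_sq_eq_mul Finset.univ
      (r := pi) (f := fun i => pi i * S i) (g := fun i => pi i * (S i)⁻¹)
      (fun i _ => (mul_pos (hpi_pos i) (hSpos i)).le)
      (fun i _ => (mul_pos (hpi_pos i) (inv_pos.mpr (hSpos i))).le)
      (fun i _ => by
        rw [sq, mul_mul_mul_comm, mul_inv_cancel₀ (hSpos i).ne', mul_one])
    rwa [hpi_sum, one_pow] at this
  calc (∑ e ∈ E, ((1 / τ) * (∫ t in (0:ℝ)..τ, pi e.1 * w e.1 e.2 t)) ^ 2 *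
        ((1 / τ) * (∫ t in (0:ℝ)..τ, 1 / (pi e.1 * w e.1 e.2 t))))⁻¹
      ≤ T⁻¹ := inv_anti₀ hTpos hTle
    _ ≤ ∑ i, pi i * (S i)⁻¹ := by
        rw [inv_eq_one_div, div_le_iff₀ hTpos]
        linarith [hCS]
end

section
/- Second-order Taylor expansion of the current large-deviation cost Ψ. Define Ψ(j,g,a) := √(g² + a²) − √(j² + a²) + j·(arcsinh(j/a) − arcsinh(g/a)) for real j, g and a > 0. Fix x > 0 and y > 0. Then, as (δj, δg, δa) → (0,0,0) in ℝ³, Ψ(x − y + δj, x − y + δg, 2√(x·y) + δa) − (δj − δg)²/(2(x + y)) = o(δj² + δg² + δa²). -/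
open scoped Topology
open Asymptotics

/-- The integrand `Ψ(j,g,a) = √(g²+a²) − √(j²+a²) + j(arcsinh(j/a) − arcsinh(g/a))`
of the joint large-deviation rate functional for the empirical current and density. -/
noncomputable def Psi (j g a : ℝ) : ℝ :=
  Real.sqrt (g ^ 2 + a ^ 2) - Real.sqrt (j ^ 2 + a ^ 2)
    + j * (Real.arsinh (j / a) - Real.arsinh (g / a))

lemma sqrt_sq_add_pos (t a : ℝ) (ha : 0 < a) : 0 < Real.sqrt (t ^ 2 + a ^ 2) :=
  Real.sqrt_pos.2 (by positivity)

lemma hasDerivAt_sqrt_sq_add (a : ℝ) (ha : 0 < a) (t : ℝ) :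
    HasDerivAt (fun g : ℝ => Real.sqrt (g ^ 2 + a ^ 2))
      (t / Real.sqrt (t ^ 2 + a ^ 2)) t := by
  have h1 : HasDerivAt (fun g : ℝ => g ^ 2 + a ^ 2) (2 * t) t := by
    simpa using (hasDerivAt_pow 2 t).add_const (a ^ 2)
  have h2 := (Real.hasDerivAt_sqrt (x := t ^ 2 + a ^ 2) (by positivity)).comp t h1
  refine h2.congr_deriv ?_
  have := (sqrt_sq_add_pos t a ha).ne'
  field_simp

lemma hasDerivAt_arsinh_div (a : ℝ) (ha : 0 < a) (t : ℝ) :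
    HasDerivAt (fun g : ℝ => Real.arsinh (g / a))
      (1 / Real.sqrt (t ^ 2 + a ^ 2)) t := by
  have h1 : HasDerivAt (fun g : ℝ => g / a) (1 / a) t := by
    simpa using (hasDerivAt_id t).div_const a
  have h2 := (Real.hasDerivAt_arsinh (t / a)).comp t h1
  refine h2.congr_deriv ?_
  have key : Real.sqrt (1 + (t / a) ^ 2) = Real.sqrt (t ^ 2 + a ^ 2) / a := by
    rw [show 1 + (t / a) ^ 2 = (t ^ 2 + a ^ 2) / a ^ 2 by field_simp; ring,
      Real.sqrt_div (by positivity), Real.sqrt_sq ha.le]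
  rw [key]
  have := (sqrt_sq_add_pos t a ha).ne'
  field_simp

lemma hasDerivAt_Psi (j a : ℝ) (ha : 0 < a) (t : ℝ) :
    HasDerivAt (fun g : ℝ => Psi j g a)
      ((t - j) / Real.sqrt (t ^ 2 + a ^ 2)) t := by
  have h1 := hasDerivAt_sqrt_sq_add a ha t
  have h2 := ((hasDerivAt_arsinh_div a ha t).const_sub
      (Real.arsinh (j / a))).const_mul j
  have h3 := (h1.sub_const (Real.sqrt (j ^ 2 + a ^ 2))).add h2
  have := (sqrt_sq_add_pos t a ha).ne'
  refine h3.congr_deriv ?_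
  field_simp
  ring

lemma continuous_inv_sqrt (a : ℝ) (ha : 0 < a) :
    Continuous (fun t : ℝ => (t - a) / Real.sqrt (t ^ 2 + a ^ 2)) := by
  apply Continuous.div (by continuity) (by continuity)
  intro t
  exact (sqrt_sq_add_pos t a ha).ne'

lemma Psi_integral (j g a : ℝ) (ha : 0 < a) :
    Psi j g a = ∫ t in j..g, (t - j) / Real.sqrt (t ^ 2 + a ^ 2) := by
  have h := intervalIntegral.integral_eq_sub_of_hasDerivAt
    (f := fun g : ℝ => Psi j g a)
    (f' := fun t => (t - j) / Real.sqrt (t ^ 2 + a ^ 2))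
    (a := j) (b := g)
    (fun t _ => hasDerivAt_Psi j a ha t)
    (Continuous.intervalIntegrable (by
      apply Continuous.div (by continuity) (by continuity)
      intro t; exact (sqrt_sq_add_pos t a ha).ne') j g)
  have hjj : Psi j j a = 0 := by simp [Psi]
  rw [h]; simp [hjj]

lemma quad_integral (j g s : ℝ) (hs : s ≠ 0) :
    ∫ t in j..g, (t - j) / s = (g - j) ^ 2 / (2 * s) := by
  have h := intervalIntegral.integral_eq_sub_of_hasDerivAt
    (f := fun t : ℝ => (t - j) ^ 2 / (2 * s))
    (f' := fun t => (t - j) / s)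
    (a := j) (b := g)
    (fun t _ => by
      have h1 : HasDerivAt (fun t : ℝ => (t - j) ^ 2) (2 * (t - j)) t := by
        simpa using ((hasDerivAt_id t).sub_const j).fun_pow 2
      have := h1.div_const (2 * s)
      refine this.congr_deriv ?_
      field_simp)
    (Continuous.intervalIntegrable ((continuous_id.sub continuous_const).div_const s) j g)
  rw [h]
  simp

theorem stmt16 (x y : ℝ) (hx : 0 < x) (hy : 0 < y) :
    (fun v : ℝ × ℝ × ℝ =>
        Psi (x - y + v.1) (x - y + v.2.1) (2 * Real.sqrt (x * y) + v.2.2)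
          - (v.1 - v.2.1) ^ 2 / (2 * (x + y)))
      =o[𝓝 (0 : ℝ × ℝ × ℝ)]
    (fun v : ℝ × ℝ × ℝ => v.1 ^ 2 + v.2.1 ^ 2 + v.2.2 ^ 2) := by
  set c : ℝ := x - y with hc
  set b : ℝ := 2 * Real.sqrt (x * y) with hb
  set s : ℝ := x + y with hsdef
  have hbpos : 0 < b := by
    have : 0 < Real.sqrt (x * y) := Real.sqrt_pos.2 (by positivity)
    positivity
  have hspos : 0 < s := by positivity
  have hcb : c ^ 2 + b ^ 2 = s ^ 2 := by
    have hxy : Real.sqrt (x * y) ^ 2 = x * y := Real.sq_sqrt (by positivity)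
    simp only [hc, hb, hsdef]
    nlinarith [hxy]
  -- continuity of 1/sqrt(t^2+a^2) at (c,b)
  have hcont : ContinuousAt (fun p : ℝ × ℝ => (Real.sqrt (p.1 ^ 2 + p.2 ^ 2))⁻¹) (c, b) := by
    apply ContinuousAt.inv₀
    · exact (Real.continuous_sqrt.comp (by continuity)).continuousAt
    · exact (sqrt_sq_add_pos c b hbpos).ne'
  have hval : Real.sqrt (c ^ 2 + b ^ 2) = s := by
    rw [hcb, Real.sqrt_sq hspos.le]
  rw [Asymptotics.isLittleO_iff]
  intro ε hε
  have hε2 : 0 < ε / 2 := by linarith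
  rcases Metric.continuousAt_iff.1 hcont (ε / 2) hε2 with ⟨δ, hδpos, hδ⟩
  set δ0 : ℝ := min δ b with hδ0
  have hδ0pos : 0 < δ0 := lt_min hδpos hbpos
  filter_upwards [Metric.ball_mem_nhds (0 : ℝ × ℝ × ℝ) hδ0pos] with v hv
  rw [Metric.mem_ball, dist_zero_right] at hv
  have hv1 : |v.1| < δ0 := lt_of_le_of_lt (norm_fst_le v) hv
  have hv2 : |v.2.1| < δ0 := lt_of_le_of_lt ((norm_fst_le v.2).trans (norm_snd_le v)) hv
  have hv3 : |v.2.2| < δ0 := lt_of_le_of_lt ((norm_snd_le v.2).trans (norm_snd_le v)) hv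
  set j : ℝ := c + v.1 with hjdef
  set g : ℝ := c + v.2.1 with hgdef
  set a : ℝ := b + v.2.2 with hadef
  have hapos : 0 < a := by
    have h' : |v.2.2| < b := lt_of_lt_of_le hv3 (min_le_right δ b)
    have h'' := abs_lt.1 h'
    rw [hadef]
    linarith [h''.1]
  -- the key pointwise estimate on the interval
  have hbound : ∀ t ∈ Set.uIoc j g,
      ‖(t - j) * ((Real.sqrt (t ^ 2 + a ^ 2))⁻¹ - s⁻¹)‖ ≤ |g - j| * (ε / 2) := by
    intro t ht
    have htj : |t - j| ≤ |g - j| := by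
      rcases le_total j g with h | h
      · rw [Set.uIoc_of_le h] at ht
        rw [abs_of_nonneg (by linarith [ht.1.le]), abs_of_nonneg (by linarith)]
        linarith [ht.2]
      · rw [Set.uIoc_of_ge h] at ht
        rw [abs_of_nonpos (by linarith [ht.2]), abs_of_nonpos (by linarith)]
        linarith [ht.1.le]
    have htc : |t - c| < δ := by
      have h1 := abs_lt.1 (lt_of_lt_of_le hv1 (min_le_left δ b))
      have h2 := abs_lt.1 (lt_of_lt_of_le hv2 (min_le_left δ b))
      rcases le_total j g with h | h
      · rw [Set.uIoc_of_le h] at ht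
        have ha1 : j ≤ t := ht.1.le
        have ha2 : t ≤ g := ht.2
        rw [hjdef] at ha1; rw [hgdef] at ha2
        rw [abs_lt]; constructor <;> linarith
      · rw [Set.uIoc_of_ge h] at ht
        have ha1 : g ≤ t := ht.1.le
        have ha2 : t ≤ j := ht.2
        rw [hgdef] at ha1; rw [hjdef] at ha2
        rw [abs_lt]; constructor <;> linarith
    have hdist : dist ((t, a) : ℝ × ℝ) (c, b) < δ := by
      rw [Prod.dist_eq]
      apply max_lt htc
      rw [Real.dist_eq]
      have hab : a - b = v.2.2 := by rw [hadef]; ring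
      rw [hab]
      exact lt_of_lt_of_le hv3 (min_le_left δ b)
    have := hδ hdist
    simp only [Real.dist_eq, hval] at this
    rw [norm_mul, Real.norm_eq_abs, Real.norm_eq_abs]
    exact mul_le_mul htj this.le (abs_nonneg _) (abs_nonneg _)
  -- integrability
  have hcsqrt : Continuous (fun t : ℝ => Real.sqrt (t ^ 2 + a ^ 2)) :=
    Real.continuous_sqrt.comp ((continuous_pow 2).add continuous_const)
  have hint1 : IntervalIntegrable
      (fun t => (t - j) / Real.sqrt (t ^ 2 + a ^ 2)) MeasureTheory.volume j g :=
    Continuous.intervalIntegrable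
      ((continuous_id.sub continuous_const).div hcsqrt
        (fun t => (sqrt_sq_add_pos t a hapos).ne')) j g
  have hint2 : IntervalIntegrable (fun t => (t - j) / s) MeasureTheory.volume j g :=
    Continuous.intervalIntegrable ((continuous_id.sub continuous_const).div_const s) j g
  have hrepr : Psi j g a - (v.1 - v.2.1) ^ 2 / (2 * s)
      = ∫ t in j..g, (t - j) * ((Real.sqrt (t ^ 2 + a ^ 2))⁻¹ - s⁻¹) := by
    have hq : (v.1 - v.2.1) ^ 2 / (2 * s) = (g - j) ^ 2 / (2 * s) := by
      have hgj' : g - j = v.2.1 - v.1 := by rw [hgdef, hjdef]; ring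
      rw [hgj']; ring
    rw [Psi_integral j g a hapos, hq, ← quad_integral j g s hspos.ne',
      ← intervalIntegral.integral_sub hint1 hint2]
    congr 1
    ext t
    have h1 := (sqrt_sq_add_pos t a hapos).ne'
    field_simp
  have hnorm := intervalIntegral.norm_integral_le_of_norm_le_const hbound
  rw [← hrepr] at hnorm
  have hgj : (g - j) ^ 2 ≤ 2 * (v.1 ^ 2 + v.2.1 ^ 2 + v.2.2 ^ 2) := by
    have hgj' : g - j = v.2.1 - v.1 := by rw [hgdef, hjdef]; ring
    rw [hgj']; nlinarith [sq_nonneg (v.1 + v.2.1), sq_nonneg v.2.2]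
  have hrhs : ‖v.1 ^ 2 + v.2.1 ^ 2 + v.2.2 ^ 2‖ = v.1 ^ 2 + v.2.1 ^ 2 + v.2.2 ^ 2 := by
    rw [Real.norm_eq_abs, abs_of_nonneg (by positivity)]
  rw [hrhs]
  calc ‖Psi j g a - (v.1 - v.2.1) ^ 2 / (2 * s)‖
      ≤ |g - j| * (ε / 2) * |g - j| := hnorm
    _ = (ε / 2) * (g - j) ^ 2 := by rw [← sq_abs (g - j)]; ring
    _ ≤ (ε / 2) * (2 * (v.1 ^ 2 + v.2.1 ^ 2 + v.2.2 ^ 2)) := by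
        apply mul_le_mul_of_nonneg_left hgj hε2.le
    _ = ε * (v.1 ^ 2 + v.2.1 ^ 2 + v.2.2 ^ 2) := by ring
end

section
/- Entropy bound on the normalization constant (key inequality behind GTUR 7). Let (Ω, 𝔉, P) be a probability space and Z : Ω → ℝ a measurable function such that Z, e^{−Z} and Z·e^{−Z} are P-integrable, E[e^{−Z}] = 1 and E[Z·e^{−Z}] = −E[Z] (expectations with respect to P). Then E[(1 + e^{Z})^{-1}] ≥ (1 + e^{E[Z]})^{-1}; equivalently, 1/E[(1 + e^{Z})^{-1}] ≤ 1 + e^{E[Z]}. -/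
open MeasureTheory

-- L2: 0 ≤ 2 + u + (u-2)e^u for u ≥ 0
lemma L2 {u : ℝ} (hu : 0 ≤ u) : 0 ≤ 2 + u + (u - 2) * Real.exp u := by
  have mono : Monotone (fun u : ℝ => 2 + u + (u - 2) * Real.exp u) := by
    apply monotone_of_hasDerivAt_nonneg (f' := fun u => 1 + (u - 1) * Real.exp u)
    · intro x
      have h1 : HasDerivAt (fun u : ℝ => (u - 2) * Real.exp u)
          (1 * Real.exp x + (x - 2) * Real.exp x) x :=
        ((hasDerivAt_id x).sub_const 2).mul (Real.hasDerivAt_exp x)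
      have h2 : HasDerivAt (fun u : ℝ => 2 + u) 1 x := (hasDerivAt_id x).const_add 2
      have := h2.add h1
      exact this.congr_deriv (by ring)
    · intro x
      have h := Real.add_one_le_exp (-x)
      have hx : Real.exp (-x) * Real.exp x = 1 := by
        rw [← Real.exp_add]; simp
      have hp := Real.exp_pos x
      simp only [Pi.zero_apply]
      nlinarith
  have := mono hu
  simpa using this

-- L3: sinh v ≥ v for v ≥ 0 (in exp form)
lemma L3 {v : ℝ} (hv : 0 ≤ v) : 0 ≤ Real.exp v - Real.exp (-v) - 2 * v := by
  have mono : Monotone (fun v : ℝ => Real.exp v - Real.exp (-v) - 2 * v) := by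
    apply monotone_of_hasDerivAt_nonneg
      (f' := fun v => Real.exp v + Real.exp (-v) - 2)
    · intro x
      have h1 : HasDerivAt (fun v : ℝ => Real.exp (-v)) (-Real.exp (-x)) x := by
        simpa [Function.comp_def] using (Real.hasDerivAt_exp (-x)).comp x ((hasDerivAt_id x).neg)
      have h2 := ((Real.hasDerivAt_exp x).sub h1).sub ((hasDerivAt_id x).const_mul 2)
      exact h2.congr_deriv (by ring)
    · intro x
      have hx : Real.exp (-x) * Real.exp x = 1 := by rw [← Real.exp_add]; simp
      have hp := Real.exp_pos x
      have hq := Real.exp_pos (-x)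
      simp only [Pi.zero_apply]
      nlinarith [sq_nonneg (Real.exp x - 1)]
  have := mono hv
  simpa using this

-- L4: Padé bound, log t ≤ 2(t-1)/(t+1) on (0,1]
lemma L4 {t : ℝ} (ht : 0 < t) (ht1 : t ≤ 1) : Real.log t ≤ 2 * (t - 1) / (t + 1) := by
  set y := -Real.log t with hy
  have hy0 : 0 ≤ y := by
    have := Real.log_nonpos ht.le ht1
    linarith
  have hey : Real.exp y = t⁻¹ := by
    rw [hy, Real.exp_neg, Real.exp_log ht]
  have h2 := L2 hy0
  rw [hey] at h2
  have hti : t * t⁻¹ = 1 := mul_inv_cancel₀ ht.ne'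
  rw [le_div_iff₀ (by linarith : (0:ℝ) < t + 1)]
  nlinarith

noncomputable def psi (x : ℝ) : ℝ :=
  (1 + x) * (Real.log 2 - Real.log (1 + x ^ 2)) + 2 * x * Real.log x

lemma psi_deriv {x : ℝ} (hx : 0 < x) :
    HasDerivAt psi ((Real.log 2 - Real.log (1 + x ^ 2))
      - (1 + x) * (2 * x / (1 + x ^ 2)) + (2 * Real.log x + 2)) x := by
  have hsq : (0:ℝ) < 1 + x ^ 2 := by positivity
  have h1 : HasDerivAt (fun x : ℝ => 1 + x ^ 2) (2 * x) x := by
    simpa using (hasDerivAt_pow 2 x).const_add 1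
  have h2 : HasDerivAt (fun x : ℝ => Real.log (1 + x ^ 2)) (2 * x / (1 + x ^ 2)) x :=
    h1.log hsq.ne'
  have h3 : HasDerivAt (fun x : ℝ => Real.log 2 - Real.log (1 + x ^ 2))
      (-(2 * x / (1 + x ^ 2))) x := by
    simpa using h2.const_sub (Real.log 2)
  have h4 : HasDerivAt (fun x : ℝ => (1 + x) * (Real.log 2 - Real.log (1 + x ^ 2)))
      (1 * (Real.log 2 - Real.log (1 + x ^ 2)) + (1 + x) * (-(2 * x / (1 + x ^ 2)))) x :=
    (((hasDerivAt_id x).const_add 1)).mul h3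
  have h5 : HasDerivAt (fun x : ℝ => 2 * x * Real.log x)
      (2 * Real.log x + 2 * x * x⁻¹) x := by
    have := (((hasDerivAt_id x).const_mul 2)).mul (Real.hasDerivAt_log hx.ne')
    exact this.congr_deriv (by simp only [id, mul_one])
  have h6 := h4.add h5
  have hxx : 2 * x * x⁻¹ = 2 := by field_simp
  rw [hxx] at h6
  exact h6.congr_deriv (by ring)

lemma psi_deriv_nonpos {x : ℝ} (hx : 0 < x) (hx1 : x < 1) :
    (Real.log 2 - Real.log (1 + x ^ 2)) - (1 + x) * (2 * x / (1 + x ^ 2))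
      + (2 * Real.log x + 2) ≤ 0 := by
  have hsq : (0:ℝ) < 1 + x ^ 2 := by positivity
  set t : ℝ := 2 * x ^ 2 / (1 + x ^ 2) with hts
  have ht : 0 < t := by positivity
  have ht1 : t ≤ 1 := by
    rw [hts, div_le_one hsq]; nlinarith
  have hlt : Real.log t = Real.log 2 + 2 * Real.log x - Real.log (1 + x ^ 2) := by
    rw [hts, Real.log_div (by positivity) hsq.ne', Real.log_mul (by norm_num) (by positivity),
      Real.log_pow]
    push_cast
    ring
  have h4 := L4 ht ht1
  rw [hlt] at h4
  -- now bound 2*(t-1)/(t+1) ≤ 2*x*(1+x)/(1+x^2) - 2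
  have h31 : (0:ℝ) < 3 * x ^ 2 + 1 := by positivity
  have key : 2 * (t - 1) / (t + 1) ≤ (1 + x) * (2 * x / (1 + x ^ 2)) - 2 := by
    have e : 2 * (t - 1) / (t + 1) = 2 * (x ^ 2 - 1) / (3 * x ^ 2 + 1) := by
      rw [hts]; field_simp; ring
    have e2 : (1 + x) * (2 * x / (1 + x ^ 2)) - 2 = (2 * x - 2) / (1 + x ^ 2) := by
      field_simp; ring
    rw [e, e2, div_le_div_iff₀ h31 hsq]
    nlinarith [mul_nonneg hx.le (pow_nonneg (by linarith : (0:ℝ) ≤ 1 - x) 3)]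
  linarith

lemma psi_nonneg {x : ℝ} (hx : 0 < x) (hx1 : x ≤ 1) : 0 ≤ psi x := by
  have hanti : AntitoneOn psi (Set.Ioc 0 1) := by
    have hint : interior (Set.Ioc (0:ℝ) 1) = Set.Ioo 0 1 := interior_Ioc
    apply antitoneOn_of_deriv_nonpos (convex_Ioc 0 1)
    · apply ContinuousOn.add
      · apply ContinuousOn.mul (by fun_prop)
        apply ContinuousOn.sub continuousOn_const
        apply ContinuousOn.log (by fun_prop)
        intro y hy
        have : (0:ℝ) < y := hy.1
        positivity
      · apply ContinuousOn.mul (by fun_prop)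
        apply ContinuousOn.log (by fun_prop)
        intro y hy
        exact ne_of_gt hy.1
    · rw [hint]
      intro y hy
      exact (psi_deriv hy.1).differentiableAt.differentiableWithinAt
    · rw [hint]
      intro y hy
      rw [(psi_deriv hy.1).deriv]
      exact psi_deriv_nonpos hy.1 hy.2
  have h1 : psi 1 = 0 := by
    simp only [psi, one_pow]
    rw [show ((1:ℝ) + 1) = 2 by norm_num, sub_self, Real.log_one]
    ring
  have := hanti (Set.mem_Ioc.2 ⟨hx, hx1⟩) (Set.mem_Ioc.2 ⟨zero_lt_one, le_refl 1⟩) hx1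
  rw [h1] at this
  exact this

-- key inequality for z ≥ 0
lemma key_nonneg {z : ℝ} (hz : 0 ≤ z) :
    (1 + Real.exp (-z)) * Real.log ((Real.exp z + Real.exp (-z)) / 2)
      ≤ z * (1 - Real.exp (-z)) := by
  set x : ℝ := Real.exp (-z) with hxdef
  have hx : 0 < x := Real.exp_pos _
  have hx1 : x ≤ 1 := Real.exp_le_one_iff.2 (by linarith)
  have hez : Real.exp z = x⁻¹ := by
    rw [hxdef, ← Real.exp_neg, neg_neg]
  have hzx : z = -Real.log x := by
    rw [hxdef, Real.log_exp]; ring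
  have hlog : Real.log ((Real.exp z + Real.exp (-z)) / 2)
      = Real.log (1 + x ^ 2) - Real.log 2 - Real.log x := by
    rw [hez, ← hxdef]
    have e : (x⁻¹ + x) / 2 = (1 + x ^ 2) / (2 * x) := by
      field_simp
    rw [e, Real.log_div (by positivity) (by positivity),
      Real.log_mul (by norm_num) hx.ne']
    ring
  have hpsi := psi_nonneg hx hx1
  rw [hlog, hzx]
  unfold psi at hpsi
  nlinarith [hpsi]

-- key inequality for all z
lemma key_all (z : ℝ) :
    (1 + Real.exp (-z)) * Real.log ((Real.exp z + Real.exp (-z)) / 2)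
      ≤ z * (1 - Real.exp (-z)) := by
  rcases le_or_gt 0 z with hz | hz
  · exact key_nonneg hz
  · have h := key_nonneg (by linarith : 0 ≤ -z)
    rw [neg_neg] at h
    have hmul : Real.exp (-z) * Real.exp z = 1 := by
      rw [← Real.exp_add]; simp
    have hpos : (0:ℝ) < Real.exp (-z) := Real.exp_pos _
    have h2 := mul_le_mul_of_nonneg_left h hpos.le
    have e1 : Real.exp (-z) * ((1 + Real.exp z) * Real.log ((Real.exp (-z) + Real.exp z) / 2))
        = (1 + Real.exp (-z)) * Real.log ((Real.exp z + Real.exp (-z)) / 2) := by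
      rw [add_comm (Real.exp (-z)) (Real.exp z), ← mul_assoc]
      congr 1
      linear_combination hmul
    have e2 : Real.exp (-z) * (-z * (1 - Real.exp z)) = z * (1 - Real.exp (-z)) := by
      nlinarith [hmul]
    rw [e1, e2] at h2
    exact h2

-- tangent line inequality for g(w)=(1+e^w)⁻¹, convex on [0,∞)
lemma tangent {m w : ℝ} (hm : 0 ≤ m) (hw : 0 ≤ w) :
    (1 + Real.exp m)⁻¹ - Real.exp m / (1 + Real.exp m) ^ 2 * (w - m)
      ≤ (1 + Real.exp w)⁻¹ := by
  set E := Real.exp m with hE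
  set u := w - m with hu
  have hEpos : 0 < E := Real.exp_pos m
  have hE1 : 1 ≤ E := Real.one_le_exp hm
  have hF : Real.exp w = E * Real.exp u := by
    rw [hE, hu, ← Real.exp_add]; ring_nf
  have hF1 : 1 ≤ E * Real.exp u := by rw [← hF]; exact Real.one_le_exp hw
  have hC : 0 ≤ 1 + (u - 1) * Real.exp u := by
    have h := Real.add_one_le_exp (-u)
    have hx : Real.exp (-u) * Real.exp u = 1 := by rw [← Real.exp_add]; simp
    nlinarith [Real.exp_pos u]
  have key : 0 ≤ (1 - Real.exp u + u) + E * (1 + (u - 1) * Real.exp u) := by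
    rcases le_or_gt 0 u with hu0 | hu0
    · have h2 := L2 hu0
      nlinarith [mul_le_mul_of_nonneg_right hE1 hC]
    · have h3 := L3 (by linarith : 0 ≤ -u)
      rw [neg_neg] at h3
      have hinv : Real.exp (-u) * Real.exp u = 1 := by rw [← Real.exp_add]; simp
      have hEge : Real.exp (-u) ≤ E := by
        have := mul_le_mul_of_nonneg_right hF1 (Real.exp_pos (-u)).le
        calc Real.exp (-u) = 1 * Real.exp (-u) := by ring
        _ ≤ E * Real.exp u * Real.exp (-u) := this
        _ = E := by rw [mul_assoc, mul_comm (Real.exp u), hinv]; ring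
      have := mul_le_mul_of_nonneg_right hEge hC
      nlinarith
  have h1 : (0:ℝ) < 1 + E := by linarith
  have h2 : (0:ℝ) < 1 + Real.exp w := by positivity
  have LHS_eq : (1 + E)⁻¹ - E / (1 + E) ^ 2 * u = ((1 + E) - E * u) / (1 + E) ^ 2 := by
    field_simp
  rw [LHS_eq, inv_eq_one_div, div_le_div_iff₀ (by positivity) h2, hF]
  nlinarith [mul_nonneg hEpos.le key]

lemma pointwise {m : ℝ} (hm : 0 ≤ m) (z : ℝ) :
    ((1 + Real.exp m)⁻¹ + Real.exp m / (1 + Real.exp m) ^ 2 * m) / 2 * (1 + Real.exp (-z))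
      - Real.exp m / (1 + Real.exp m) ^ 2 / 2 * (z * (1 - Real.exp (-z)))
      ≤ (1 + Real.exp z)⁻¹ := by
  have hcpos : (0:ℝ) ≤ Real.exp m / (1 + Real.exp m) ^ 2 := by positivity
  have hmul : Real.exp z * Real.exp (-z) = 1 := by rw [← Real.exp_add]; simp
  have hch : (0:ℝ) < (Real.exp z + Real.exp (-z)) / 2 := by positivity
  have hch1 : (1:ℝ) ≤ (Real.exp z + Real.exp (-z)) / 2 := by
    nlinarith [sq_nonneg (Real.exp z - 1), Real.exp_pos z]
  set w := Real.log ((Real.exp z + Real.exp (-z)) / 2) with hwdef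
  have hw : 0 ≤ w := Real.log_nonneg hch1
  have hexpw : Real.exp w = (Real.exp z + Real.exp (-z)) / 2 := Real.exp_log hch
  have hid : (1 + Real.exp z)⁻¹ = (1 + Real.exp (-z)) / 2 * (1 + Real.exp w)⁻¹ := by
    rw [hexpw]
    have h1 : (0:ℝ) < 1 + Real.exp z := by positivity
    have h2 : (0:ℝ) < 1 + (Real.exp z + Real.exp (-z)) / 2 := by positivity
    field_simp
    nlinarith [hmul]
  have htan := tangent hm hw
  have hkey := key_all z
  rw [← hwdef] at hkey
  have hpos2 : (0:ℝ) ≤ (1 + Real.exp (-z)) / 2 := by positivity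
  have h3 := mul_le_mul_of_nonneg_left htan hpos2
  rw [← hid] at h3
  have h4 := mul_le_mul_of_nonneg_left hkey
    (by positivity : (0:ℝ) ≤ Real.exp m / (1 + Real.exp m) ^ 2 / 2)
  nlinarith [h3, h4]

theorem stmt18
    {Ω : Type} [MeasurableSpace Ω]
    (P : Measure Ω) [IsProbabilityMeasure P]
    (Z : Ω → ℝ) (hZ_meas : Measurable Z)
    (hZ_int : Integrable Z P)
    (hZ_exp_int : Integrable (fun ω => Real.exp (-Z ω)) P)
    (hZ_mul_int : Integrable (fun ω => Z ω * Real.exp (-Z ω)) P)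
    (h_exp : ∫ ω, Real.exp (-Z ω) ∂P = 1)
    (h_mul : ∫ ω, Z ω * Real.exp (-Z ω) ∂P = - ∫ ω, Z ω ∂P) :
    (1 + Real.exp (∫ ω, Z ω ∂P))⁻¹ ≤ ∫ ω, (1 + Real.exp (Z ω))⁻¹ ∂P ∧
    (∫ ω, (1 + Real.exp (Z ω))⁻¹ ∂P)⁻¹ ≤ 1 + Real.exp (∫ ω, Z ω ∂P) := by
  set m := ∫ ω, Z ω ∂P with hm_def
  -- integrability of Z(1-e^{-Z})
  have hsub_eq : (fun ω => Z ω * (1 - Real.exp (-Z ω)))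
      = fun ω => Z ω - Z ω * Real.exp (-Z ω) := by
    funext ω; ring
  have hint_sub : Integrable (fun ω => Z ω * (1 - Real.exp (-Z ω))) P := by
    rw [hsub_eq]; exact hZ_int.sub hZ_mul_int
  have h2m : ∫ ω, Z ω * (1 - Real.exp (-Z ω)) ∂P = 2 * m := by
    rw [hsub_eq, integral_sub hZ_int hZ_mul_int, h_mul, ← hm_def]
    ring
  have hm : 0 ≤ m := by
    have hnn : 0 ≤ ∫ ω, Z ω * (1 - Real.exp (-Z ω)) ∂P := by
      apply integral_nonneg
      intro ω
      simp only [Pi.zero_apply]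
      rcases le_or_gt 0 (Z ω) with h | h
      · apply mul_nonneg h
        have : Real.exp (-Z ω) ≤ 1 := Real.exp_le_one_iff.2 (by linarith)
        linarith
      · have : (1:ℝ) ≤ Real.exp (-Z ω) := Real.one_le_exp (by linarith)
        nlinarith
    rw [h2m] at hnn
    linarith
  set a := ((1 + Real.exp m)⁻¹ + Real.exp m / (1 + Real.exp m) ^ 2 * m) / 2 with ha
  set c2 := Real.exp m / (1 + Real.exp m) ^ 2 / 2 with hc2
  have hone_int : Integrable (fun ω => 1 + Real.exp (-Z ω)) P := by
    have := (integrable_const (1:ℝ)).add hZ_exp_int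
    simpa using this
  have hlow_int : Integrable
      (fun ω => a * (1 + Real.exp (-Z ω)) - c2 * (Z ω * (1 - Real.exp (-Z ω)))) P :=
    (hone_int.const_mul a).sub (hint_sub.const_mul c2)
  have hup_int : Integrable (fun ω => (1 + Real.exp (Z ω))⁻¹) P := by
    apply Integrable.mono' (integrable_const (1:ℝ))
    · exact (Measurable.aestronglyMeasurable
        ((measurable_const.add (Real.measurable_exp.comp hZ_meas)).inv))
    · filter_upwards with ω
      rw [Real.norm_eq_abs, abs_of_nonneg (by positivity)]
      have h1 : (1:ℝ) ≤ 1 + Real.exp (Z ω) := by nlinarith [Real.exp_pos (Z ω)]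
      exact inv_le_one_of_one_le₀ h1
  have hIneq : ∫ ω, (a * (1 + Real.exp (-Z ω)) - c2 * (Z ω * (1 - Real.exp (-Z ω)))) ∂P
      ≤ ∫ ω, (1 + Real.exp (Z ω))⁻¹ ∂P := by
    apply integral_mono hlow_int hup_int
    intro ω
    exact pointwise hm (Z ω)
  have hone_val : ∫ ω, (1 + Real.exp (-Z ω)) ∂P = 2 := by
    rw [integral_add (integrable_const 1) hZ_exp_int, h_exp]
    simp
    norm_num
  have hlow_val : ∫ ω, (a * (1 + Real.exp (-Z ω)) - c2 * (Z ω * (1 - Real.exp (-Z ω)))) ∂P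
      = (1 + Real.exp m)⁻¹ := by
    rw [integral_sub (hone_int.const_mul a) (hint_sub.const_mul c2),
      integral_const_mul, integral_const_mul, hone_val, h2m, ha, hc2]
    ring
  rw [hlow_val] at hIneq
  refine ⟨hIneq, ?_⟩
  have hpos : (0:ℝ) < (1 + Real.exp m)⁻¹ := by positivity
  have := inv_anti₀ hpos hIneq
  rwa [inv_inv] at this
end

section
/- Reflection identity for the second moment (the identity E[G²] = 1/(2𝒩)). Let (Ω, 𝔉, P) be a probability space, R : Ω → Ω a measurable map with R∘R = id, and Z : Ω → ℝ a measurable function with Z∘R = −Z everywhere. Assume that the pushforward measure P∘R⁻¹ is absolutely continuous with respect to P with density e^{−Z}, i.e. ∫ f∘R dP = ∫ f·e^{−Z} dP for every bounded measurable f : Ω → ℝ. Then E[(1 + e^{Z})^{-2}] = (1/2)·E[(1 + e^{Z})^{-1}]. Equivalently, setting 𝒩 := E[(1 + e^{Z})^{-1}] and G := (1/𝒩)·(1 + e^{Z})^{-1}, one has E[G²] = 1/(2𝒩). -/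
open MeasureTheory

theorem stmt19
    {Ω : Type} [MeasurableSpace Ω]
    (P : Measure Ω) [IsProbabilityMeasure P]
    (R : Ω → Ω) (hR_meas : Measurable R)
    (hR_inv : R ∘ R = id)
    (Z : Ω → ℝ) (hZ_meas : Measurable Z)
    (hZR : ∀ ω, Z (R ω) = - Z ω)
    (h_push : ∀ f : Ω → ℝ, Measurable f → (∃ C : ℝ, ∀ ω, |f ω| ≤ C) →
      ∫ ω, f (R ω) ∂P = ∫ ω, f ω * Real.exp (-Z ω) ∂P) :
    ∫ ω, ((1 + Real.exp (Z ω))⁻¹) ^ 2 ∂P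
      = (1 / 2) * ∫ ω, (1 + Real.exp (Z ω))⁻¹ ∂P := by
  set f : Ω → ℝ := fun ω => Real.exp (Z ω) / (1 + Real.exp (Z ω)) ^ 2 with hf
  have hpos : ∀ ω, (0:ℝ) < 1 + Real.exp (Z ω) := fun ω => by positivity
  have hf_meas : Measurable f := by
    apply Measurable.div (hZ_meas.exp)
    exact ((measurable_const.add hZ_meas.exp).pow measurable_const)
  have hf_bd : ∀ ω, |f ω| ≤ 1 := by
    intro ω
    have h1 : (0:ℝ) ≤ f ω := by
      have := (hpos ω).le
      positivity
    rw [abs_of_nonneg h1]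
    rw [div_le_one (by positivity)]
    nlinarith [Real.exp_pos (Z ω), sq_nonneg (1 - Real.exp (Z ω))]
  have key := h_push f hf_meas ⟨1, hf_bd⟩
  have hfR : ∀ ω, f (R ω) = f ω := by
    intro ω
    simp only [hf, hZR]
    rw [Real.exp_neg]
    have ha := Real.exp_pos (Z ω)
    field_simp
    ring
  have hfe : ∀ ω, f ω * Real.exp (-Z ω) = ((1 + Real.exp (Z ω))⁻¹) ^ 2 := by
    intro ω
    simp only [hf, Real.exp_neg]
    have ha := Real.exp_pos (Z ω)
    field_simp
  -- key : ∫ f = ∫ (1+e^Z)^{-2}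
  rw [show (fun ω => f (R ω)) = f from funext hfR] at key
  simp only [hfe] at key
  -- pointwise: f = (1+e^Z)^{-1} - (1+e^Z)^{-2}
  have hsplit : ∀ ω, f ω = (1 + Real.exp (Z ω))⁻¹ - ((1 + Real.exp (Z ω))⁻¹) ^ 2 := by
    intro ω
    have h := (hpos ω).ne'
    simp only [hf]
    field_simp
    ring
  have hint2 : Integrable (fun ω => ((1 + Real.exp (Z ω))⁻¹) ^ 2) P := by
    apply (integrable_const (1:ℝ)).mono'
    · exact (((measurable_const.add hZ_meas.exp).inv).pow measurable_const).aestronglyMeasurable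
    · filter_upwards with ω
      have h := hpos ω
      rw [Real.norm_eq_abs, abs_of_nonneg (by positivity)]
      have : (1 + Real.exp (Z ω))⁻¹ ≤ 1 := by
        rw [inv_le_one_iff₀]; right; nlinarith [Real.exp_pos (Z ω)]
      nlinarith [inv_pos.mpr h]
  have hint1 : Integrable (fun ω => (1 + Real.exp (Z ω))⁻¹) P := by
    apply (integrable_const (1:ℝ)).mono'
    · exact ((measurable_const.add hZ_meas.exp).inv).aestronglyMeasurable
    · filter_upwards with ω
      have h := hpos ω
      rw [Real.norm_eq_abs, abs_of_nonneg (by positivity)]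
      rw [inv_le_one_iff₀]; right; nlinarith [Real.exp_pos (Z ω)]
  have : ∫ ω, f ω ∂P = (∫ ω, (1 + Real.exp (Z ω))⁻¹ ∂P)
      - ∫ ω, ((1 + Real.exp (Z ω))⁻¹) ^ 2 ∂P := by
    rw [show f = fun ω => (1 + Real.exp (Z ω))⁻¹ - ((1 + Real.exp (Z ω))⁻¹) ^ 2
        from funext hsplit]
    exact integral_sub hint1 hint2
  rw [this] at key
  linarith
end
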